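/- arXiv:1810.09063 — 15 statements merged into one kernel-verified Lean document; each statement's English description precedes it below -/
import Mathlib

section
/- For every z ∈ ℝ, the infimum of the function a ↦ z·(∑_{i=1}^N a_i) + c₁(a) over the box A is attained at the point â(z) defined componentwise by â_i(z) := μ_i · min(z⁻, A_max), i = 1, …, N. Moreover, if z⁻ ≤ A_max, then H_m(z) = (1/2) μ̄ (z⁻)². -/
lemma pointwise_min (μ Amax z a : ℝ) (hμ : 0 < μ) (hAmax : 0 < Amax)
    (ha : 0 ≤ a) (ha' : a ≤ μ * Amax) :
    z * (μ * min (max (-z) 0) Amax) + (1/2) * ((μ * min (max (-z) 0) Amax) ^ 2 / μ)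
      ≤ z * a + (1/2) * (a ^ 2 / μ) := by
  set m := min (max (-z) 0) Amax with hm
  rcases le_or_gt (-z) 0 with hz | hz
  · have hm0 : m = 0 := by simp [hm, max_eq_right hz, hAmax.le]
    rw [hm0]
    have hz' : 0 ≤ z := by linarith
    have h2 : 0 ≤ a ^ 2 / μ := by positivity
    have hzero : z * (μ * 0) + 1/2 * ((μ * 0) ^ 2 / μ) = 0 := by simp
    rw [hzero]
    have := mul_nonneg hz' ha
    linarith
  · have hmx : max (-z) 0 = -z := max_eq_left hz.le
    rcases le_or_gt (-z) Amax with h | h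
    · have hme : m = -z := by rw [hm, hmx, min_eq_left h]
      rw [hme]
      have hd : z * a + (1/2) * (a ^ 2 / μ) - (z * (μ * -z) + (1/2) * ((μ * -z) ^ 2 / μ))
          = (a + μ * z) ^ 2 / (2 * μ) := by field_simp; ring
      have : 0 ≤ (a + μ * z) ^ 2 / (2 * μ) := by positivity
      linarith
    · have hme : m = Amax := by rw [hm, hmx, min_eq_right h.le]
      rw [hme]
      have hd : z * a + (1/2) * (a ^ 2 / μ) - (z * (μ * Amax) + (1/2) * ((μ * Amax) ^ 2 / μ))
          = (a - μ * Amax) * (2 * μ * z + a + μ * Amax) / (2 * μ) := by field_simp; ring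
      have h1 : a - μ * Amax ≤ 0 := by linarith
      have h2 : 2 * μ * z + a + μ * Amax ≤ 0 := by nlinarith
      have h3 : 0 ≤ (a - μ * Amax) * (2 * μ * z + a + μ * Amax) := by
        nlinarith [mul_nonneg (neg_nonneg.2 h1) (neg_nonneg.2 h2)]
      have h4 : 0 ≤ (a - μ * Amax) * (2 * μ * z + a + μ * Amax) / (2 * μ) := by positivity
      linarith

/-- The infimum of `a ↦ z·∑ aᵢ + c₁(a)` over the box `A` is attained at
`â(z)` with `âᵢ(z) = μᵢ · min(z⁻, A_max)`, and if `z⁻ ≤ A_max` then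
`H_m(z) = (1/2) μ̄ (z⁻)²`. -/
theorem first_best_drift_hamiltonian
    (N : ℕ) (hN : 1 ≤ N) (μ : Fin N → ℝ) (hμ : ∀ i, 0 < μ i)
    (Amax : ℝ) (hAmax : 0 < Amax)
    (A : Set (Fin N → ℝ)) (hA : A = {a | ∀ i, a i ∈ Set.Icc 0 (μ i * Amax)})
    (c₁ : (Fin N → ℝ) → ℝ) (hc₁ : c₁ = fun a => (1 / 2) * ∑ i, (a i) ^ 2 / μ i)
    (μbar : ℝ) (hμbar : μbar = ∑ i, μ i)
    (Hm : ℝ → ℝ)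
    (hHm : Hm = fun z => - sInf ((fun a => z * (∑ i, a i) + c₁ a) '' A))
    (z : ℝ) (ahat : Fin N → ℝ)
    (hahat : ahat = fun i => μ i * min (max (-z) 0) Amax) :
    ahat ∈ A ∧
      (∀ a ∈ A, z * (∑ i, ahat i) + c₁ ahat ≤ z * (∑ i, a i) + c₁ a) ∧
      (max (-z) 0 ≤ Amax → Hm z = (1 / 2) * μbar * (max (-z) 0) ^ 2) := by
  have hm0 : 0 ≤ min (max (-z) 0) Amax := le_min (le_max_right _ _) hAmax.le
  have hmem : ahat ∈ A := by
    rw [hA, hahat]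
    intro i
    exact ⟨mul_nonneg (hμ i).le hm0,
      mul_le_mul_of_nonneg_left (min_le_right _ _) (hμ i).le⟩
  have hmin : ∀ a ∈ A, z * (∑ i, ahat i) + c₁ ahat ≤ z * (∑ i, a i) + c₁ a := by
    intro a ha
    rw [hA] at ha
    simp only [hc₁, hahat, Finset.mul_sum, ← Finset.sum_add_distrib]
    apply Finset.sum_le_sum
    intro i _
    exact pointwise_min (μ i) Amax z (a i) (hμ i) hAmax (ha i).1 (ha i).2
  refine ⟨hmem, hmin, fun hzA => ?_⟩
  set m := max (-z) 0 with hmdef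
  have hmin' : min m Amax = m := min_eq_left hzA
  have hval : z * (∑ i, ahat i) + c₁ ahat = - ((1/2) * μbar * m ^ 2) := by
    simp only [hahat, hc₁, hμbar, hmin']
    have hzm : z * m = - m ^ 2 := by
      rcases le_or_gt (-z) 0 with h | h
      · have : m = 0 := by simp [hmdef, max_eq_right h]
        simp [this]
      · have : m = -z := by simp [hmdef, max_eq_left h.le]
        rw [this]; ring
    have h1 : ∑ i, (μ i * m) = (∑ i, μ i) * m := by rw [Finset.sum_mul]
    have h2 : ∑ i, (μ i * m) ^ 2 / μ i = (∑ i, μ i) * m ^ 2 := by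
      rw [Finset.sum_mul]
      apply Finset.sum_congr rfl
      intro i _
      rw [div_eq_iff (hμ i).ne']
      ring
    rw [h1, h2]
    have h3 : z * ((∑ i, μ i) * m) = (∑ i, μ i) * (z * m) := by ring
    rw [h3, hzm]
    ring
  have hinf : sInf ((fun a => z * (∑ i, a i) + c₁ a) '' A) = - ((1/2) * μbar * m ^ 2) := by
    apply IsLeast.csInf_eq
    constructor
    · exact ⟨ahat, hmem, hval⟩
    · rintro y ⟨a, ha, rfl⟩
      calc - ((1/2) * μbar * m ^ 2) = z * (∑ i, ahat i) + c₁ ahat := hval.symm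
        _ ≤ _ := hmin a ha
  rw [hHm]
  simp only [hinf]
  ring
end

section
/- For every γ ∈ ℝ, the infimum of the function b ↦ c₂(b) − γ |σ(b)|² over B is attained at the point b̂(γ); consequently H_v(γ) = −(1/2)( c₂(b̂(γ)) − γ |σ(b̂(γ))|² ). -/
lemma key_coord (A C ε t : ℝ) (hA : 0 < A) (hC : 0 < C) (hε : 0 < ε) (hε1 : ε ≤ 1)
    (ht1 : ε ≤ t) (ht2 : t ≤ 1) :
    A / (max ε (min 1 (Real.sqrt (A / C)))) + C * (max ε (min 1 (Real.sqrt (A / C))))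
      ≤ A / t + C * t := by
  set r := Real.sqrt (A / C) with hr
  have hr0 : 0 < r := Real.sqrt_pos.2 (div_pos hA hC)
  have hr2 : r ^ 2 = A / C := Real.sq_sqrt (le_of_lt (div_pos hA hC))
  have hCr2 : C * r ^ 2 = A := by rw [hr2]; field_simp
  set s := max ε (min 1 r) with hs
  have hs0 : 0 < s := lt_of_lt_of_le hε (le_max_left _ _)
  have ht0 : 0 < t := lt_of_lt_of_le hε ht1
  have hkey : 0 ≤ (t - s) * (C * t * s - A) := by
    rcases le_total r ε with h1 | h1
    · have hse : s = ε := by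
        rw [hs, min_eq_right (le_trans h1 hε1), max_eq_left h1]
      rw [hse]
      have ha : r ^ 2 ≤ ε ^ 2 := by nlinarith
      have hb : ε ^ 2 ≤ t * ε := by nlinarith
      have h3 : A ≤ C * t * ε := by
        rw [← hCr2]
        nlinarith [mul_le_mul_of_nonneg_left ha hC.le, mul_le_mul_of_nonneg_left hb hC.le]
      exact mul_nonneg (by linarith) (by linarith)
    · rcases le_total 1 r with h2 | h2
      · have hse : s = 1 := by
          rw [hs, min_eq_left h2, max_eq_right hε1]
        rw [hse]
        have ha : (1:ℝ) ≤ r ^ 2 := by nlinarith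
        have h3 : C * t * 1 ≤ A := by
          rw [← hCr2]
          nlinarith [mul_le_mul_of_nonneg_left ha hC.le]
        nlinarith [mul_nonneg (by linarith : (0:ℝ) ≤ 1 - t) (by linarith : (0:ℝ) ≤ A - C * t * 1)]
      · have hse : s = r := by
          rw [hs, min_eq_right h2, max_eq_right h1]
        rw [hse]
        have : C * t * r - A = C * r * (t - r) := by nlinarith
        rw [this]
        have : (t - r) * (C * r * (t - r)) = C * r * (t - r) ^ 2 := by ring
        rw [this]
        positivity
  have hdiff : (A / t + C * t) - (A / s + C * s) = (t - s) * (C * t * s - A) / (t * s) := by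
    field_simp
    ring
  have : 0 ≤ (A / t + C * t) - (A / s + C * s) := by
    rw [hdiff]
    exact div_nonneg hkey (le_of_lt (mul_pos ht0 hs0))
  linarith


/-- The infimum of `b ↦ c₂(b) − γ|σ(b)|²` over `B` is attained at `b̂(γ)`,
and consequently `H_v(γ) = −(1/2)(c₂(b̂(γ)) − γ|σ(b̂(γ))|²)`. -/
theorem volatility_hamiltonian_attained
    (d : ℕ) (hd : 1 ≤ d) (σ lam : Fin d → ℝ)
    (hσ : ∀ j, 0 < σ j) (hlam : ∀ j, 0 < lam j)
    (ε : ℝ) (hε : ε ∈ Set.Ioo (0 : ℝ) 1)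
    (B : Set (Fin d → ℝ)) (hB : B = {b | ∀ j, b j ∈ Set.Icc ε 1})
    (c₂ : (Fin d → ℝ) → ℝ)
    (hc₂ : c₂ = fun b => ∑ j, (σ j) ^ 2 / lam j * (1 / b j - 1))
    (σsq : (Fin d → ℝ) → ℝ) (hσsq : σsq = fun b => ∑ j, (σ j) ^ 2 * b j)
    (Hv : ℝ → ℝ)
    (hHv : Hv = fun γ => -(1 / 2) * sInf ((fun b => c₂ b - γ * σsq b) '' B))
    (γ : ℝ) (bhat : Fin d → ℝ)
    (hbhat : bhat = fun j =>
      if γ < 0 then max ε (min 1 ((lam j * max (-γ) 0) ^ (-(1 : ℝ) / 2))) else 1) :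
    bhat ∈ B ∧
      (∀ b ∈ B, c₂ bhat - γ * σsq bhat ≤ c₂ b - γ * σsq b) ∧
      Hv γ = -(1 / 2) * (c₂ bhat - γ * σsq bhat) := by
  obtain ⟨hε0, hε1⟩ := hε
  have hε1' : ε ≤ 1 := hε1.le
  -- membership
  have hmem : bhat ∈ B := by
    rw [hB]
    intro j
    rw [hbhat]
    simp only
    split_ifs with hγ
    · exact ⟨le_max_left _ _, max_le hε1' (min_le_left _ _)⟩
    · exact ⟨hε1', le_refl 1⟩
  have hmin : ∀ b ∈ B, c₂ bhat - γ * σsq bhat ≤ c₂ b - γ * σsq b := by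
    intro b hb
    rw [hB, Set.mem_setOf_eq] at hb
    rw [hc₂, hσsq]
    simp only
    rw [Finset.mul_sum, Finset.mul_sum, ← Finset.sum_sub_distrib, ← Finset.sum_sub_distrib]
    apply Finset.sum_le_sum
    intro j _
    obtain ⟨hbj1, hbj2⟩ := hb j
    have hbj0 : 0 < b j := lt_of_lt_of_le hε0 hbj1
    have hσj : 0 < (σ j) ^ 2 := pow_pos (hσ j) 2
    by_cases hγ : γ < 0
    · -- use key_coord with A = σ²/λ, C = -γσ²
      have hbh : bhat j = max ε (min 1 (Real.sqrt ((σ j ^ 2 / lam j) / (-γ * σ j ^ 2)))) := by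
        rw [hbhat]
        simp only [if_pos hγ]
        congr 1
        congr 1
        rw [max_eq_left (by linarith : (0:ℝ) ≤ -γ)]
        have hx : (0:ℝ) < lam j * -γ := mul_pos (hlam j) (by linarith)
        rw [show (-(1:ℝ)/2) = -(1/2) by ring, Real.rpow_neg hx.le, ← Real.sqrt_eq_rpow,
          ← Real.sqrt_inv]
        have he : σ j ^ 2 / lam j / (-γ * σ j ^ 2) = (lam j * -γ)⁻¹ := by
          have h1 : lam j * (-γ * σ j ^ 2) ≠ 0 := by
            have : (0:ℝ) < lam j * (-γ * σ j ^ 2) := by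
              nlinarith [pow_pos (hσ j) 2, hlam j]
            exact this.ne'
          have h2 : lam j * -γ ≠ 0 := by
            have : (0:ℝ) < lam j * -γ := by nlinarith [hlam j]
            exact this.ne'
          rw [div_div, inv_eq_one_div, div_eq_div_iff h1 h2]
          ring
        rw [he]
      have hA : 0 < σ j ^ 2 / lam j := div_pos hσj (hlam j)
      have hC : 0 < -γ * σ j ^ 2 := mul_pos (by linarith) hσj
      have hk := key_coord (σ j ^ 2 / lam j) (-γ * σ j ^ 2) ε (b j) hA hC hε0 hε1' hbj1 hbj2
      rw [← hbh] at hk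
      have e1 : ∀ t : ℝ, t ≠ 0 → σ j ^ 2 / lam j * (1 / t - 1) - γ * (σ j ^ 2 * t)
          = (σ j ^ 2 / lam j) / t + (-γ * σ j ^ 2) * t - σ j ^ 2 / lam j := by
        intro t ht
        simp only [div_eq_mul_inv, one_div]
        ring
      have hbh0 : 0 < bhat j := by
        rw [hB] at hmem; exact lt_of_lt_of_le hε0 (hmem j).1
      rw [e1 _ hbh0.ne', e1 _ hbj0.ne']
      linarith
    · -- γ ≥ 0, bhat j = 1
      push_neg at hγ
      have hbh : bhat j = 1 := by rw [hbhat]; simp [not_lt.2 hγ]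
      rw [hbh]
      have h1 : 1 ≤ 1 / b j := one_le_one_div hbj0 hbj2
      have h2 : 0 ≤ σ j ^ 2 / lam j * (1 / b j - 1) :=
        mul_nonneg (div_pos hσj (hlam j)).le (by linarith)
      have h3 : γ * (σ j ^ 2 * b j) ≤ γ * (σ j ^ 2 * 1) :=
        mul_le_mul_of_nonneg_left (by nlinarith) hγ
      simp only [one_div] at h1 h2 ⊢
      simp only [inv_one]
      linarith
  refine ⟨hmem, hmin, ?_⟩
  rw [hHv]
  simp only
  congr 1
  have hL : IsLeast ((fun b => c₂ b - γ * σsq b) '' B) (c₂ bhat - γ * σsq bhat) :=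
    ⟨⟨bhat, hmem, rfl⟩, by rintro x ⟨b, hb, rfl⟩; exact hmin b hb⟩
  exact hL.csInf_eq
end

section
/- For every q ≥ 0 one has −2 H_v(−q) = F₀(q). Moreover, the function F₀ is continuous and nondecreasing on [0, ∞). -/
noncomputable def phiAux (ε : ℝ) (x : ℝ) : ℝ :=
  if x ≤ 1 then x else if x < (ε ^ 2)⁻¹ then 2 * Real.sqrt x - 1 else ε * x + ε⁻¹ - 1

lemma phiAux_le (ε : ℝ) (hε0 : 0 < ε) (hε1 : ε < 1) (x : ℝ) (hx : 0 ≤ x)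
    (b : ℝ) (hb : b ∈ Set.Icc ε 1) :
    phiAux ε x ≤ 1 / b - 1 + x * b := by
  have hb0 : 0 < b := lt_of_lt_of_le hε0 hb.1
  have hb1 : b ≤ 1 := hb.2
  unfold phiAux
  split_ifs with h1 h2
  · -- x ≤ 1
    have e : 1 / b - 1 + x * b = x + (1 - b) * (1 - x * b) / b := by
      field_simp; ring
    have hxb : x * b ≤ 1 := by nlinarith
    have hnn : 0 ≤ (1 - b) * (1 - x * b) / b :=
      div_nonneg (mul_nonneg (by linarith) (by linarith)) hb0.le
    rw [e]; linarith
  · -- middle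
    have hs : Real.sqrt x ^ 2 = x := Real.sq_sqrt hx
    have hsn : 0 ≤ Real.sqrt x := Real.sqrt_nonneg x
    have key : 2 * Real.sqrt x * b ≤ 1 + x * b ^ 2 := by
      nlinarith [sq_nonneg (Real.sqrt x * b - 1)]
    have e : 1 / b - 1 + x * b - (2 * Real.sqrt x - 1) = (1 + x * b ^ 2 - 2 * Real.sqrt x * b) / b := by
      field_simp; ring
    have := div_nonneg (by linarith : (0:ℝ) ≤ 1 + x * b ^ 2 - 2 * Real.sqrt x * b) hb0.le
    linarith
  · -- x ≥ (ε²)⁻¹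
    have hxc : (ε ^ 2)⁻¹ ≤ x := le_of_not_gt h2
    have hinv : ε ^ 2 * (ε ^ 2)⁻¹ = 1 := mul_inv_cancel₀ (by positivity)
    have h2pos : (0:ℝ) < ε ^ 2 := by positivity
    have hx0 : 0 ≤ x := le_trans (inv_pos.2 h2pos).le hxc
    have hstep : (ε ^ 2)⁻¹ * ε ≤ x * b := mul_le_mul hxc hb.1 hε0.le hx0
    have hstep2 : (ε ^ 2)⁻¹ * ε * ε ≤ x * b * ε := mul_le_mul_of_nonneg_right hstep hε0.le
    have hone : (ε ^ 2)⁻¹ * ε * ε = 1 := by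
      rw [mul_assoc, ← sq, inv_mul_cancel₀ h2pos.ne']
    have hnum : 1 ≤ x * b * ε := by linarith
    have e : (1 / b - 1 + x * b) - (ε * x + ε⁻¹ - 1) = (b - ε) * (x * b * ε - 1) / (b * ε) := by
      field_simp; ring
    have hnn : 0 ≤ (b - ε) * (x * b * ε - 1) / (b * ε) :=
      div_nonneg (mul_nonneg (by linarith [hb.1]) (by linarith)) (by positivity)
    linarith

lemma phiAux_attained (ε : ℝ) (hε0 : 0 < ε) (hε1 : ε < 1) (x : ℝ) (hx : 0 ≤ x) :
    ∃ b ∈ Set.Icc ε 1, 1 / b - 1 + x * b = phiAux ε x := by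
  unfold phiAux
  by_cases h1 : x ≤ 1
  · exact ⟨1, ⟨hε1.le, le_refl 1⟩, by rw [if_pos h1]; ring⟩
  · push_neg at h1
    by_cases h2 : x < (ε ^ 2)⁻¹
    · have hx1 : 1 < x := h1
      have hs1 : 1 < Real.sqrt x := by
        have := Real.sqrt_lt_sqrt (by norm_num) hx1
        simpa using this
      have hs0 : 0 < Real.sqrt x := by linarith
      have hsle : Real.sqrt x < ε⁻¹ := by
        have hc : Real.sqrt ((ε ^ 2)⁻¹) = ε⁻¹ := by
          rw [Real.sqrt_inv, Real.sqrt_sq hε0.le]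
        calc Real.sqrt x < Real.sqrt ((ε ^ 2)⁻¹) := Real.sqrt_lt_sqrt hx h2
          _ = ε⁻¹ := hc
      refine ⟨(Real.sqrt x)⁻¹, ⟨?_, ?_⟩, ?_⟩
      · rw [show ε = (ε⁻¹)⁻¹ by rw [inv_inv]]
        exact inv_anti₀ (by positivity) hsle.le
      · rw [show (1:ℝ) = (1:ℝ)⁻¹ by norm_num]
        exact inv_anti₀ one_pos hs1.le
      · rw [if_neg (not_le.2 h1), if_pos h2]
        have hms : Real.sqrt x * Real.sqrt x = x := Real.mul_self_sqrt hx
        rw [one_div, inv_inv]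
        have : x * (Real.sqrt x)⁻¹ = Real.sqrt x := by
          rw [← hms]; field_simp; rw [Real.sqrt_sq hs0.le]
        rw [this]; ring
    · refine ⟨ε, ⟨le_refl ε, hε1.le⟩, ?_⟩
      rw [if_neg (not_le.2 h1), if_neg h2, one_div]
      ring

lemma phiAux_continuous (ε : ℝ) (hε0 : 0 < ε) (hε1 : ε < 1) : Continuous (phiAux ε) := by
  have hc1 : (1:ℝ) < (ε ^ 2)⁻¹ := by
    have h2 : ε ^ 2 < 1 := by nlinarith
    have := mul_inv_cancel₀ (show ε ^ 2 ≠ 0 by positivity)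
    nlinarith [inv_pos.2 (show (0:ℝ) < ε ^ 2 by positivity)]
  have hrw : phiAux ε = fun x =>
      if x ≤ 1 then x else if (ε ^ 2)⁻¹ ≤ x then ε * x + ε⁻¹ - 1 else 2 * Real.sqrt x - 1 := by
    funext x; unfold phiAux
    split_ifs <;> first | rfl | linarith
  rw [hrw]
  have hinner : Continuous fun x : ℝ =>
      if (ε ^ 2)⁻¹ ≤ x then ε * x + ε⁻¹ - 1 else 2 * Real.sqrt x - 1 := by
    apply Continuous.if_le
    · continuity
    · continuity
    · exact continuous_const
    · exact continuous_id
    · intro x hx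
      have hs : Real.sqrt x = ε⁻¹ := by
        rw [← hx, Real.sqrt_inv, Real.sqrt_sq hε0.le]
      rw [hs, ← hx]
      field_simp
      ring
  apply Continuous.if_le continuous_id hinner continuous_id continuous_const
  intro x hx
  simp only [id_eq] at hx
  subst hx
  rw [if_neg (not_le.2 hc1), Real.sqrt_one]
  norm_num

lemma phiAux_mono (ε : ℝ) (hε0 : 0 < ε) (hε1 : ε < 1) :
    MonotoneOn (phiAux ε) (Set.Ici 0) := by
  have h2pos : (0:ℝ) < ε ^ 2 := by positivity
  have hinv : ε ^ 2 * (ε ^ 2)⁻¹ = 1 := mul_inv_cancel₀ h2pos.ne'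
  have hcpos : (0:ℝ) < (ε ^ 2)⁻¹ := inv_pos.2 h2pos
  have hc1 : (1:ℝ) < (ε ^ 2)⁻¹ := by nlinarith
  have hεinv : ε * ε⁻¹ = 1 := mul_inv_cancel₀ hε0.ne'
  have hεinv1 : 1 ≤ ε⁻¹ := by nlinarith [inv_pos.2 hε0]
  have hεc : ε * (ε ^ 2)⁻¹ = ε⁻¹ := by
    rw [sq, mul_inv]
    rw [← mul_assoc, mul_inv_cancel₀ hε0.ne', one_mul]
  intro x hx y hy hxy
  simp only [Set.mem_Ici] at hx hy
  unfold phiAux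
  split_ifs with a1 a2 a3 a4 a5 a6 a7 a8
  · exact hxy
  · -- x ≤ 1, 1 < y < c
    have : 1 ≤ Real.sqrt y := by
      rw [show (1:ℝ) = Real.sqrt 1 from Real.sqrt_one.symm]
      exact Real.sqrt_le_sqrt (by linarith [not_le.1 a2])
    linarith
  · -- x ≤ 1, y ≥ c
    push_neg at a3
    have : ε⁻¹ ≤ ε * y := by
      calc ε⁻¹ = ε * (ε ^ 2)⁻¹ := hεc.symm
        _ ≤ ε * y := by nlinarith
    linarith
  · linarith [not_le.1 a1]
  · have := Real.sqrt_le_sqrt hxy; linarith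
  · -- x middle, y ≥ c
    push_neg at a6
    have hsx : Real.sqrt x ≤ ε⁻¹ := by
      have : Real.sqrt x ≤ Real.sqrt ((ε ^ 2)⁻¹) := Real.sqrt_le_sqrt a4.le
      rwa [Real.sqrt_inv, Real.sqrt_sq hε0.le] at this
    have : ε⁻¹ ≤ ε * y := by
      calc ε⁻¹ = ε * (ε ^ 2)⁻¹ := hεc.symm
        _ ≤ ε * y := by nlinarith
    linarith
  · push_neg at a4; linarith
  · push_neg at a4; linarith
  · nlinarith

/-- For every `q ≥ 0`, `−2 H_v(−q) = F₀(q)`; moreover `F₀` is continuous and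
nondecreasing on `[0, ∞)`. -/
theorem F0_eq_neg_two_Hv_and_monotone
    (d : ℕ) (hd : 1 ≤ d) (σ lam : Fin d → ℝ)
    (hσ : ∀ j, 0 < σ j) (hlam : ∀ j, 0 < lam j)
    (ε : ℝ) (hε : ε ∈ Set.Ioo (0 : ℝ) 1)
    (B : Set (Fin d → ℝ)) (hB : B = {b | ∀ j, b j ∈ Set.Icc ε 1})
    (c₂ : (Fin d → ℝ) → ℝ)
    (hc₂ : c₂ = fun b => ∑ j, (σ j) ^ 2 / lam j * (1 / b j - 1))
    (σsq : (Fin d → ℝ) → ℝ) (hσsq : σsq = fun b => ∑ j, (σ j) ^ 2 * b j)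
    (Hv : ℝ → ℝ)
    (hHv : Hv = fun γ => -(1 / 2) * sInf ((fun b => c₂ b - γ * σsq b) '' B))
    (φ : ℝ → ℝ)
    (hφ : φ = fun x =>
      if x ≤ 1 then x else if x < (ε ^ 2)⁻¹ then 2 * Real.sqrt x - 1 else ε * x + ε⁻¹ - 1)
    (F₀ : ℝ → ℝ) (hF₀ : F₀ = fun q => ∑ j, (σ j) ^ 2 / lam j * φ (lam j * q)) :
    (∀ q, 0 ≤ q → -2 * Hv (-q) = F₀ q) ∧
      ContinuousOn F₀ (Set.Ici 0) ∧ MonotoneOn F₀ (Set.Ici 0) := by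
  obtain ⟨hε0, hε1⟩ := hε
  have hφ' : φ = phiAux ε := hφ
  subst hφ' hF₀ hB hc₂ hσsq hHv
  refine ⟨?_, ?_, ?_⟩
  · intro q hq
    choose bs hmem heq using fun j => phiAux_attained ε hε0 hε1 (lam j * q)
      (mul_nonneg (hlam j).le hq)
    have key : sInf ((fun b : Fin d → ℝ => (∑ j, (σ j) ^ 2 / lam j * (1 / b j - 1))
          - (-q) * (∑ j, (σ j) ^ 2 * b j)) '' {b : Fin d → ℝ | ∀ j, b j ∈ Set.Icc ε 1})
        = ∑ j, (σ j) ^ 2 / lam j * phiAux ε (lam j * q) := by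
      apply IsLeast.csInf_eq
      constructor
      · refine ⟨bs, hmem, ?_⟩
        simp only [Finset.mul_sum, ← Finset.sum_sub_distrib]
        apply Finset.sum_congr rfl
        intro j _
        rw [← heq j]
        have hbj : bs j ≠ 0 := (lt_of_lt_of_le hε0 (hmem j).1).ne'
        field_simp [hbj, (hlam j).ne']
        ring
      · intro v hv
        obtain ⟨b, hbB, rfl⟩ := hv
        simp only [Finset.mul_sum, ← Finset.sum_sub_distrib]
        apply Finset.sum_le_sum
        intro j _
        have hle := phiAux_le ε hε0 hε1 (lam j * q) (mul_nonneg (hlam j).le hq) (b j) (hbB j)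
        have hbj : b j ≠ 0 := (lt_of_lt_of_le hε0 (hbB j).1).ne'
        have hcoef : 0 ≤ (σ j) ^ 2 / lam j := div_nonneg (sq_nonneg _) (hlam j).le
        calc (σ j) ^ 2 / lam j * phiAux ε (lam j * q)
            ≤ (σ j) ^ 2 / lam j * (1 / b j - 1 + (lam j * q) * b j) :=
              mul_le_mul_of_nonneg_left hle hcoef
          _ = (σ j) ^ 2 / lam j * (1 / b j - 1) - -q * ((σ j) ^ 2 * b j) := by
              field_simp [hbj, (hlam j).ne']; ring
    simp only []
    rw [key]
    ring
  · apply Continuous.continuousOn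
    apply continuous_finset_sum
    intro j _
    exact continuous_const.mul ((phiAux_continuous ε hε0 hε1).comp
      (continuous_const.mul continuous_id))
  · intro x hx y hy hxy
    simp only [Set.mem_Ici] at hx hy
    apply Finset.sum_le_sum
    intro j _
    have hcoef : 0 ≤ (σ j) ^ 2 / lam j := div_nonneg (sq_nonneg _) (hlam j).le
    refine mul_le_mul_of_nonneg_left ?_ hcoef
    exact phiAux_mono ε hε0 hε1 (Set.mem_Ici.2 (mul_nonneg (hlam j).le hx))
      (Set.mem_Ici.2 (mul_nonneg (hlam j).le hy))
      (mul_le_mul_of_nonneg_left hxy (hlam j).le)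
end

section
/- Define f₀(q, γ) := q |σ(b̂(γ))|² + c₂(b̂(γ)). For every q ≥ 0, the infimum of γ ↦ f₀(q, γ) over γ ∈ (−∞, 0] is attained at γ = −q, and inf_{γ ≤ 0} f₀(q, γ) = f₀(q, −q) = −2 H_v(−q). -/
lemma scalar_min (A C ε t b : ℝ) (hA : 0 < A) (hC : 0 < C) (hε : 0 < ε) (hε1 : ε ≤ 1)
    (ht : 0 < t) (hAt : A * (t * t) = C) (hb : ε ≤ b) (hb1 : b ≤ 1) :
    A * max ε (min 1 t) + C / max ε (min 1 t) ≤ A * b + C / b := by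
  set m := max ε (min 1 t) with hm
  have hmε : ε ≤ m := le_max_left _ _
  have hm0 : 0 < m := lt_of_lt_of_le hε hmε
  have hb0 : 0 < b := lt_of_lt_of_le hε hb
  have key : 0 ≤ (b - m) * (A * b * m - C) := by
    rcases le_or_gt t ε with h1 | h1
    · have hme : m = ε := by
        rw [hm, min_eq_right (h1.trans hε1), max_eq_left h1]
      rw [hme]
      have httε : t * t ≤ b * ε := by nlinarith
      have h3 : C ≤ A * (b * ε) := hAt ▸ mul_le_mul_of_nonneg_left httε hA.le
      nlinarith
    · rcases le_or_gt 1 t with h2 | h2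
      · have hme : m = 1 := by rw [hm, min_eq_left h2, max_eq_right hε1]
        rw [hme]
        have htt1 : (1:ℝ) ≤ t * t := by nlinarith
        have h3 : A * b ≤ C := by nlinarith [mul_le_mul_of_nonneg_left htt1 hA.le]
        nlinarith
      · have hme : m = t := by rw [hm, min_eq_right h2.le, max_eq_right h1.le]
        rw [hme]
        nlinarith [mul_nonneg (mul_pos hA ht).le (sq_nonneg (b - t))]
  have expand : A * b + C / b - (A * m + C / m) = (b - m) * (A * b * m - C) / (b * m) := by
    field_simp
    ring
  have hpos : 0 ≤ (b - m) * (A * b * m - C) / (b * m) :=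
    div_nonneg key (mul_pos hb0 hm0).le
  linarith [expand ▸ hpos]

/-- With `f₀(q,γ) := q|σ(b̂(γ))|² + c₂(b̂(γ))`, for every `q ≥ 0` the infimum of
`γ ↦ f₀(q,γ)` over `(−∞,0]` is attained at `γ = −q`, and
`inf_{γ ≤ 0} f₀(q,γ) = f₀(q,−q) = −2 H_v(−q)`. -/
theorem volatility_cost_minimiser
    (d : ℕ) (hd : 1 ≤ d) (σ lam : Fin d → ℝ)
    (hσ : ∀ j, 0 < σ j) (hlam : ∀ j, 0 < lam j)
    (ε : ℝ) (hε : ε ∈ Set.Ioo (0 : ℝ) 1)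
    (B : Set (Fin d → ℝ)) (hB : B = {b | ∀ j, b j ∈ Set.Icc ε 1})
    (c₂ : (Fin d → ℝ) → ℝ)
    (hc₂ : c₂ = fun b => ∑ j, (σ j) ^ 2 / lam j * (1 / b j - 1))
    (σsq : (Fin d → ℝ) → ℝ) (hσsq : σsq = fun b => ∑ j, (σ j) ^ 2 * b j)
    (Hv : ℝ → ℝ)
    (hHv : Hv = fun γ => -(1 / 2) * sInf ((fun b => c₂ b - γ * σsq b) '' B))
    (bhat : ℝ → Fin d → ℝ)
    (hbhat : bhat = fun γ j =>
      if γ < 0 then max ε (min 1 ((lam j * max (-γ) 0) ^ (-(1 : ℝ) / 2))) else 1)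
    (f₀ : ℝ → ℝ → ℝ) (hf₀ : f₀ = fun q γ => q * σsq (bhat γ) + c₂ (bhat γ))
    (q : ℝ) (hq : 0 ≤ q) :
    (∀ γ ≤ (0 : ℝ), f₀ q (-q) ≤ f₀ q γ) ∧
      sInf (f₀ q '' Set.Iic 0) = f₀ q (-q) ∧
      f₀ q (-q) = -2 * Hv (-q) := by
  obtain ⟨hε0, hε1⟩ := hε
  have hε1' : ε ≤ 1 := hε1.le
  set G : (Fin d → ℝ) → ℝ := fun b => q * σsq b + c₂ b with hG
  have hmem : ∀ γ : ℝ, bhat γ ∈ B := by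
    intro γ
    rw [hB, hbhat]
    intro j
    dsimp only
    split
    · exact ⟨le_max_left _ _, max_le hε1' (min_le_left _ _)⟩
    · exact ⟨hε1', le_refl 1⟩
  have hGmin : ∀ b ∈ B, G (bhat (-q)) ≤ G b := by
    intro b hb
    rw [hB] at hb
    rw [hG]
    dsimp only
    rw [hσsq, hc₂]
    dsimp only
    rw [Finset.mul_sum, Finset.mul_sum, ← Finset.sum_add_distrib, ← Finset.sum_add_distrib]
    apply Finset.sum_le_sum
    intro j _
    obtain ⟨hbj, hbj1⟩ := hb j
    have hb0 : 0 < b j := lt_of_lt_of_le hε0 hbj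
    have hC : 0 < σ j ^ 2 / lam j := div_pos (pow_pos (hσ j) 2) (hlam j)
    rcases eq_or_lt_of_le hq with hq0 | hq0
    · have hb1 : bhat (-q) j = 1 := by
        rw [hbhat]; dsimp only; rw [if_neg]; rw [← hq0]; norm_num
      rw [hb1, ← hq0]
      have h1b : (0:ℝ) ≤ 1 / b j - 1 := by
        have : 1 ≤ 1 / b j := (le_div_iff₀ hb0).2 (by linarith)
        linarith
      simp only [zero_mul, zero_add]
      nlinarith
    · have hneg : -q < 0 := neg_lt_zero.mpr hq0
      have hbh : bhat (-q) j = max ε (min 1 ((lam j * q) ^ (-(1:ℝ)/2))) := by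
        rw [hbhat]; dsimp only; rw [if_pos hneg, neg_neg, max_eq_left hq]
      set t := (lam j * q) ^ (-(1:ℝ)/2) with htdef
      have hlq : 0 < lam j * q := mul_pos (hlam j) hq0
      have ht : 0 < t := Real.rpow_pos_of_pos hlq _
      have htt : t * t = (lam j * q)⁻¹ := by
        rw [htdef, ← Real.rpow_add hlq,
          show (-(1:ℝ)/2 + -(1:ℝ)/2) = -1 by norm_num, Real.rpow_neg_one]
      have hAt : (q * σ j ^ 2) * (t * t) = σ j ^ 2 / lam j := by
        have h1 : lam j ≠ 0 := (hlam j).ne'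
        have h2 : q ≠ 0 := hq0.ne'
        rw [htt, mul_inv]
        field_simp
      have key := scalar_min (q * σ j ^ 2) (σ j ^ 2 / lam j) ε t (b j)
        (mul_pos hq0 (pow_pos (hσ j) 2)) hC hε0 hε1' ht hAt hbj hbj1
      rw [hbh]
      set m := max ε (min 1 t) with hmdef
      have hm0 : 0 < m := lt_of_lt_of_le hε0 (le_max_left _ _)
      have e1 : q * (σ j ^ 2 * m) + σ j ^ 2 / lam j * (1 / m - 1)
          = (q * σ j ^ 2) * m + (σ j ^ 2 / lam j) / m - σ j ^ 2 / lam j := by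
        rw [mul_sub, mul_one_div, mul_one]; ring
      have e2 : q * (σ j ^ 2 * b j) + σ j ^ 2 / lam j * (1 / b j - 1)
          = (q * σ j ^ 2) * b j + (σ j ^ 2 / lam j) / b j - σ j ^ 2 / lam j := by
        rw [mul_sub, mul_one_div, mul_one]; ring
      rw [e1, e2]
      linarith
  have hmemB : bhat (-q) ∈ B := hmem _
  have hlbG : ∀ x ∈ G '' B, G (bhat (-q)) ≤ x := by
    rintro x ⟨b, hb, rfl⟩; exact hGmin b hb
  have hneG : (G '' B).Nonempty := ⟨G (bhat (-q)), ⟨_, hmemB, rfl⟩⟩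
  have hInfG : sInf (G '' B) = G (bhat (-q)) :=
    le_antisymm (csInf_le ⟨_, hlbG⟩ ⟨_, hmemB, rfl⟩) (le_csInf hneG hlbG)
  have hf0G : ∀ γ : ℝ, f₀ q γ = G (bhat γ) := by
    intro γ; rw [hf₀]
  have part1 : ∀ γ ≤ (0:ℝ), f₀ q (-q) ≤ f₀ q γ := by
    intro γ _
    rw [hf0G, hf0G]
    exact hGmin (bhat γ) (hmem γ)
  refine ⟨part1, ?_, ?_⟩
  · have hmemI : f₀ q (-q) ∈ f₀ q '' Set.Iic 0 :=
      ⟨-q, neg_nonpos.mpr hq, rfl⟩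
    have hlb : ∀ x ∈ f₀ q '' Set.Iic 0, f₀ q (-q) ≤ x := by
      rintro x ⟨γ, hγ, rfl⟩; exact part1 γ hγ
    exact le_antisymm (csInf_le ⟨_, hlb⟩ hmemI) (le_csInf ⟨_, hmemI⟩ hlb)
  · have hfun : (fun b => c₂ b - (-q) * σsq b) = G := by
      funext b; rw [hG]; ring
    rw [hf0G, hHv]
    dsimp only
    rw [hfun, hInfG]
    ring
end

section
/- Let T > 0, κ ≥ 0 and r > 0. Define E : [0,T] × ℝ → ℝ by E(t,x) := κ(T−t) x + ∫_t^T H_v(−r κ² (T−s)²) ds. Then E(T, x) = 0 for all x ∈ ℝ; for each t ∈ [0,T] the map x ↦ E(t,x) is affine with ∂_x E(t,x) = κ(T−t) and ∂²_{xx} E(t,x) = 0; and for every (t,x) ∈ (0,T) × ℝ the partial derivative ∂_t E(t,x) exists and satisfies ∂_t E(t,x) + H_v( ∂²_{xx} E(t,x) − r (∂_x E(t,x))² ) + κ x = 0. In other words, E is a classical solution of the terminal-value HJB problem ∂_t E + H_v(E_{xx} − r E_x²) + κx = 0 on (0,T) × ℝ with E(T, ·) = 0. -/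
/-- `E(t,x) = κ(T−t)x + ∫_t^T H_v(−rκ²(T−s)²) ds` is a classical solution of the
terminal-value HJB problem `∂_t E + H_v(E_xx − r E_x²) + κx = 0` on `(0,T) × ℝ`, `E(T,·) = 0`,
with `E_x(t,x) = κ(T−t)` and `E_xx = 0`. -/
theorem consumer_certainty_equivalent_HJB
    (d : ℕ) (hd : 1 ≤ d) (σ lam : Fin d → ℝ)
    (hσ : ∀ j, 0 < σ j) (hlam : ∀ j, 0 < lam j)
    (ε : ℝ) (hε : ε ∈ Set.Ioo (0 : ℝ) 1)
    (B : Set (Fin d → ℝ)) (hB : B = {b | ∀ j, b j ∈ Set.Icc ε 1})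
    (c₂ : (Fin d → ℝ) → ℝ)
    (hc₂ : c₂ = fun b => ∑ j, (σ j) ^ 2 / lam j * (1 / b j - 1))
    (σsq : (Fin d → ℝ) → ℝ) (hσsq : σsq = fun b => ∑ j, (σ j) ^ 2 * b j)
    (Hv : ℝ → ℝ)
    (hHv : Hv = fun γ => -(1 / 2) * sInf ((fun b => c₂ b - γ * σsq b) '' B))
    (T κ r : ℝ) (hT : 0 < T) (hκ : 0 ≤ κ) (hr : 0 < r)
    (E : ℝ → ℝ → ℝ)
    (hE : E = fun t x => κ * (T - t) * x + ∫ s in t..T, Hv (-(r * κ ^ 2 * (T - s) ^ 2))) :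
    (∀ x, E T x = 0) ∧
      (∀ t x, HasDerivAt (E t) (κ * (T - t)) x) ∧
      (∀ t x, HasDerivAt (deriv (E t)) 0 x) ∧
      (∀ t ∈ Set.Ioo (0 : ℝ) T, ∀ x : ℝ,
        HasDerivAt (fun s => E s x)
          (-(Hv ((0 : ℝ) - r * (κ * (T - t)) ^ 2) + κ * x)) t) := by
  -- basic facts about B, c₂, σsq
  have hBne : B.Nonempty := by
    refine ⟨fun _ => 1, ?_⟩
    rw [hB]; intro j; exact ⟨hε.2.le, le_refl 1⟩
  set M : ℝ := ∑ j, (σ j) ^ 2 with hM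
  have hM0 : 0 ≤ M := Finset.sum_nonneg fun j _ => sq_nonneg _
  have hσsq_mem : ∀ b ∈ B, 0 ≤ σsq b ∧ σsq b ≤ M := by
    intro b hb
    rw [hB] at hb
    constructor
    · rw [hσsq]
      exact Finset.sum_nonneg fun j _ =>
        mul_nonneg (sq_nonneg _) (le_trans hε.1.le (hb j).1)
    · rw [hσsq, hM]
      exact Finset.sum_le_sum fun j _ => by
        nlinarith [sq_nonneg (σ j), (hb j).2]
  have hc₂_nonneg : ∀ b ∈ B, 0 ≤ c₂ b := by
    intro b hb
    rw [hB] at hb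
    rw [hc₂]
    refine Finset.sum_nonneg fun j _ => mul_nonneg ?_ ?_
    · exact div_nonneg (sq_nonneg _) (hlam j).le
    · have h1 : 0 < b j := lt_of_lt_of_le hε.1 (hb j).1
      have h2 : b j ≤ 1 := (hb j).2
      have := one_le_one_div h1 h2
      linarith
  -- boundedness below of images
  have hbdd : ∀ γ : ℝ, ∀ b ∈ B, -(|γ| * M) ≤ c₂ b - γ * σsq b := by
    intro γ b hb
    have h1 := hc₂_nonneg b hb
    have h2 := hσsq_mem b hb
    have : γ * σsq b ≤ |γ| * M := by
      calc γ * σsq b ≤ |γ * σsq b| := le_abs_self _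
        _ = |γ| * |σsq b| := abs_mul _ _
        _ = |γ| * σsq b := by rw [abs_of_nonneg h2.1]
        _ ≤ |γ| * M := by nlinarith [abs_nonneg γ]
    linarith
  have hbddBelow : ∀ γ : ℝ, BddBelow ((fun b => c₂ b - γ * σsq b) '' B) := by
    intro γ
    exact ⟨-(|γ| * M), fun y ⟨b, hb, hby⟩ => hby ▸ hbdd γ b hb⟩
  -- the key Lipschitz estimate for the infimum
  have hinf_le : ∀ γ₁ γ₂ : ℝ,
      sInf ((fun b => c₂ b - γ₁ * σsq b) '' B) ≤
        sInf ((fun b => c₂ b - γ₂ * σsq b) '' B) + M * |γ₁ - γ₂| := by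
    intro γ₁ γ₂
    rw [← sub_le_iff_le_add]
    apply le_csInf (hBne.image _)
    rintro y ⟨b, hb, rfl⟩
    have h1 : sInf ((fun b => c₂ b - γ₁ * σsq b) '' B) ≤ c₂ b - γ₁ * σsq b :=
      csInf_le (hbddBelow γ₁) (Set.mem_image_of_mem _ hb)
    show sInf ((fun b => c₂ b - γ₁ * σsq b) '' B) - M * |γ₁ - γ₂| ≤ c₂ b - γ₂ * σsq b
    have h2 := hσsq_mem b hb
    have : (γ₂ - γ₁) * σsq b ≤ M * |γ₁ - γ₂| := by
      calc (γ₂ - γ₁) * σsq b ≤ |(γ₂ - γ₁) * σsq b| := le_abs_self _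
        _ = |γ₂ - γ₁| * |σsq b| := abs_mul _ _
        _ = |γ₁ - γ₂| * σsq b := by rw [abs_of_nonneg h2.1, abs_sub_comm]
        _ ≤ |γ₁ - γ₂| * M := by nlinarith [abs_nonneg (γ₁ - γ₂)]
        _ = M * |γ₁ - γ₂| := mul_comm _ _
    linarith
  -- Hv is Lipschitz, hence continuous
  have hHvLip : LipschitzWith (Real.toNNReal (M / 2 + 1)) Hv := by
    apply LipschitzWith.of_dist_le_mul
    intro γ₁ γ₂
    rw [Real.dist_eq, Real.dist_eq, Real.coe_toNNReal _ (by linarith : (0:ℝ) ≤ M / 2 + 1)]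
    rw [hHv]
    simp only
    have h1 := hinf_le γ₁ γ₂
    have h2 := hinf_le γ₂ γ₁
    rw [abs_sub_comm γ₂ γ₁] at h2
    rw [abs_le]
    constructor <;> nlinarith [abs_nonneg (γ₁ - γ₂)]
  have hHvCont : Continuous Hv := hHvLip.continuous
  -- the integrand is continuous
  have hgCont : Continuous (fun s : ℝ => Hv (-(r * κ ^ 2 * (T - s) ^ 2))) := by
    exact hHvCont.comp (by fun_prop)
  refine ⟨?_, ?_, ?_, ?_⟩
  · intro x
    rw [hE]
    simp
  · intro t x
    rw [hE]
    simpa using (((hasDerivAt_id x).const_mul (κ * (T - t))).add_const (∫ s in t..T, Hv (-(r * κ ^ 2 * (T - s) ^ 2))))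
  · intro t x
    have hd : deriv (E t) = fun _ => κ * (T - t) := by
      funext y
      exact (by rw [hE]; simpa using (((hasDerivAt_id y).const_mul (κ * (T - t))).add_const (∫ s in t..T, Hv (-(r * κ ^ 2 * (T - s) ^ 2)))) :
        HasDerivAt (E t) (κ * (T - t)) y).deriv
    rw [hd]
    exact hasDerivAt_const _ _
  · intro t ht x
    rw [hE]
    have h1 : HasDerivAt (fun s : ℝ => κ * (T - s) * x) (-(κ * x)) t := by
      have := (((hasDerivAt_id t).const_sub T).const_mul κ).mul_const x
      simpa using this
    have h2 : HasDerivAt (fun s : ℝ => ∫ u in s..T, Hv (-(r * κ ^ 2 * (T - u) ^ 2)))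
        (-(Hv (-(r * κ ^ 2 * (T - t) ^ 2)))) t := by
      have key : HasDerivAt (fun s : ℝ => ∫ u in T..s, Hv (-(r * κ ^ 2 * (T - u) ^ 2)))
          (Hv (-(r * κ ^ 2 * (T - t) ^ 2))) t :=
        intervalIntegral.integral_hasDerivAt_right
          (hgCont.intervalIntegrable _ _)
          hgCont.aestronglyMeasurable.stronglyMeasurableAtFilter
          hgCont.continuousAt
      have := key.neg
      refine this.congr_of_eventuallyEq (Filter.Eventually.of_forall fun s => ?_)
      exact intervalIntegral.integral_symm _ _
    have := h1.add h2
    have harg : (0 : ℝ) - r * (κ * (T - t)) ^ 2 = -(r * κ ^ 2 * (T - t) ^ 2) := by ring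
    rw [harg]
    have e : -(Hv (-(r * κ ^ 2 * (T - t) ^ 2)) + κ * x) = -(κ * x) + -Hv (-(r * κ ^ 2 * (T - t) ^ 2)) := by ring
    rw [e]; exact this
end

section
/- Let T > 0, κ ≥ 0, r > 0, λ̄ := max_{1 ≤ j ≤ d} λ_j and s := ∑_{j=1}^d σ_j². If r κ² T² ≤ 1/λ̄, then H_v(−r κ² (T−t)²) = −(1/2) r κ² s (T−t)² for every t ∈ [0,T], and consequently ∫_0^T H_v(−r κ² (T−t)²) dt = −r κ² s T³ / 6. -/
/-- In the small-risk regime `rκ²T² ≤ 1/λ̄`, one has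
`H_v(−rκ²(T−t)²) = −(1/2) rκ² s (T−t)²` on `[0,T]`, and hence
`∫_0^T H_v(−rκ²(T−t)²) dt = −rκ² s T³/6`. -/
theorem no_effort_certainty_equivalent
    (d : ℕ) (hd : 1 ≤ d) (σ lam : Fin d → ℝ)
    (hσ : ∀ j, 0 < σ j) (hlam : ∀ j, 0 < lam j)
    (ε : ℝ) (hε : ε ∈ Set.Ioo (0 : ℝ) 1)
    (B : Set (Fin d → ℝ)) (hB : B = {b | ∀ j, b j ∈ Set.Icc ε 1})
    (c₂ : (Fin d → ℝ) → ℝ)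
    (hc₂ : c₂ = fun b => ∑ j, (σ j) ^ 2 / lam j * (1 / b j - 1))
    (σsq : (Fin d → ℝ) → ℝ) (hσsq : σsq = fun b => ∑ j, (σ j) ^ 2 * b j)
    (Hv : ℝ → ℝ)
    (hHv : Hv = fun γ => -(1 / 2) * sInf ((fun b => c₂ b - γ * σsq b) '' B))
    (lamb : ℝ) (hlamb : IsGreatest (Set.range lam) lamb)
    (s : ℝ) (hs : s = ∑ j, (σ j) ^ 2)
    (T κ r : ℝ) (hT : 0 < T) (hκ : 0 ≤ κ) (hr : 0 < r)
    (hsmall : r * κ ^ 2 * T ^ 2 ≤ 1 / lamb) :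
    (∀ t ∈ Set.Icc (0 : ℝ) T,
        Hv (-(r * κ ^ 2 * (T - t) ^ 2)) = -(1 / 2) * r * κ ^ 2 * s * (T - t) ^ 2) ∧
      (∫ t in (0 : ℝ)..T, Hv (-(r * κ ^ 2 * (T - t) ^ 2))) = -(r * κ ^ 2 * s * T ^ 3 / 6) := by
  obtain ⟨⟨j0, hj0⟩, lamb_ub⟩ := hlamb
  have hlamb_pos : 0 < lamb := hj0 ▸ hlam j0
  -- pointwise statement
  have main : ∀ t ∈ Set.Icc (0 : ℝ) T,
      Hv (-(r * κ ^ 2 * (T - t) ^ 2)) = -(1 / 2) * r * κ ^ 2 * s * (T - t) ^ 2 := by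
    intro t ht
    set A : ℝ := r * κ ^ 2 * (T - t) ^ 2 with hA
    have hA0 : 0 ≤ A := by positivity
    have hA1 : A ≤ 1 / lamb := by
      have h1 : (T - t) ^ 2 ≤ T ^ 2 := by
        obtain ⟨h2, h3⟩ := ht; nlinarith
      have h2 : A ≤ r * κ ^ 2 * T ^ 2 := by
        have : 0 ≤ r * κ ^ 2 := by positivity
        exact mul_le_mul_of_nonneg_left h1 this
      linarith
    have hAl : A * lamb ≤ 1 := by
      rw [le_div_iff₀ hlamb_pos] at hA1; linarith
    -- the value at b = 1
    have hone : (fun _ => (1:ℝ)) ∈ B := by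
      rw [hB]; intro j; exact ⟨hε.2.le, le_refl 1⟩
    have hval : (fun b => c₂ b - (-A) * σsq b) (fun _ => (1:ℝ)) = A * s := by
      simp [hc₂, hσsq, hs, Finset.mul_sum]
    -- lower bound
    have hlow : ∀ b ∈ B, A * s ≤ c₂ b - (-A) * σsq b := by
      intro b hb
      rw [hB] at hb
      have term : ∀ j : Fin d,
          A * (σ j) ^ 2 ≤ (σ j) ^ 2 / lam j * (1 / b j - 1) + A * ((σ j) ^ 2 * b j) := by
        intro j
        have hx : 0 < b j := lt_of_lt_of_le hε.1 (hb j).1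
        have hx1 : b j ≤ 1 := (hb j).2
        have hl : 0 < lam j := hlam j
        have hll : lam j ≤ lamb := lamb_ub ⟨j, rfl⟩
        have hAlx : A * lam j * b j ≤ 1 := by
          nlinarith [mul_le_mul_of_nonneg_left hll hA0,
            mul_le_mul_of_nonneg_left hx1 (mul_nonneg hA0 hl.le)]
        rw [← sub_nonneg]
        have heq : (σ j) ^ 2 / lam j * (1 / b j - 1) + A * ((σ j) ^ 2 * b j) - A * (σ j) ^ 2
            = (σ j) ^ 2 * (1 - b j) * (1 - A * lam j * b j) / (lam j * b j) := by
          field_simp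
          ring
        rw [heq]
        apply div_nonneg
        · apply mul_nonneg (mul_nonneg (by positivity) (by linarith)) (by linarith)
        · positivity
      calc A * s = ∑ j, A * (σ j) ^ 2 := by rw [hs, Finset.mul_sum]
        _ ≤ ∑ j, ((σ j) ^ 2 / lam j * (1 / b j - 1) + A * ((σ j) ^ 2 * b j)) :=
            Finset.sum_le_sum (fun j _ => term j)
        _ = c₂ b - (-A) * σsq b := by
            rw [hc₂, hσsq]
            rw [Finset.mul_sum, ← Finset.sum_sub_distrib]
            exact Finset.sum_congr rfl fun j _ => by ring
    -- compute the infimum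
    have hinf : sInf ((fun b => c₂ b - (-A) * σsq b) '' B) = A * s := by
      have hmem : A * s ∈ (fun b => c₂ b - (-A) * σsq b) '' B := ⟨_, hone, hval⟩
      have hbdd : A * s ∈ lowerBounds ((fun b => c₂ b - (-A) * σsq b) '' B) := by
        rintro y ⟨b, hb, rfl⟩
        exact hlow b hb
      exact le_antisymm (csInf_le ⟨A * s, hbdd⟩ hmem) (le_csInf ⟨_, hmem⟩ hbdd)
    rw [hHv]
    simp only
    rw [show -(r * κ ^ 2 * (T - t) ^ 2) = -A from rfl, hinf]
    ring
  refine ⟨main, ?_⟩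
  have hcongr : (∫ t in (0 : ℝ)..T, Hv (-(r * κ ^ 2 * (T - t) ^ 2)))
      = ∫ t in (0 : ℝ)..T, -(1 / 2) * r * κ ^ 2 * s * (T - t) ^ 2 := by
    apply intervalIntegral.integral_congr
    intro t ht
    rw [Set.uIcc_of_le hT.le] at ht
    exact main t ht
  rw [hcongr]
  have h1 : (∫ t in (0 : ℝ)..T, -(1 / 2) * r * κ ^ 2 * s * (T - t) ^ 2)
      = -(1 / 2) * r * κ ^ 2 * s * ∫ t in (0 : ℝ)..T, (T - t) ^ 2 := by
    rw [← intervalIntegral.integral_const_mul]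
  have h2 : (∫ t in (0 : ℝ)..T, (T - t) ^ 2) = T ^ 3 / 3 := by
    rw [intervalIntegral.integral_comp_sub_left (fun x => x ^ 2) T]
    simp [integral_pow]
    norm_num
  rw [h1, h2]
  ring
end

section
/- Let T > 0, δ ∈ ℝ, h ≥ 0, p, r > 0, ρ := rp/(r+p), and assume |δ| T ≤ A_max. Define m_FB(t) := (1/2) μ̄ (δ⁻)² (T−t)² + H_v(−h − ρ δ² (T−t)²) and v̄(t,x) := δ(T−t) x + ∫_t^T m_FB(s) ds. Then v̄(T, x) = 0 for all x ∈ ℝ; for each t the map x ↦ v̄(t,x) is affine with ∂_x v̄(t,x) = δ(T−t) and ∂²_{xx} v̄(t,x) = 0; and for every (t,x) ∈ (0,T) × ℝ the partial derivative ∂_t v̄(t,x) exists and satisfies −∂_t v̄(t,x) = δ x + H_m(∂_x v̄(t,x)) + H_v( ∂²_{xx} v̄(t,x) − ρ (∂_x v̄(t,x))² − h ). In other words, v̄ is a classical solution of the first-best HJB equation −∂_t v̄ = δx + H_m(v̄_x) + H_v(v̄_{xx} − ρ v̄_x² − h) on (0,T) × ℝ with v̄(T, ·) = 0. -/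
set_option maxHeartbeats 1000000


/-- The function `v̄(t,x) = δ(T−t)x + ∫_t^T m_FB(s) ds`, with
`m_FB(t) = (1/2)μ̄(δ⁻)²(T−t)² + H_v(−h − ρδ²(T−t)²)`, is a classical solution of the
first-best HJB equation `−∂_t v̄ = δx + H_m(v̄_x) + H_v(v̄_xx − ρ v̄_x² − h)` on `(0,T) × ℝ`
with `v̄(T,·) = 0`, `v̄_x(t,x) = δ(T−t)` and `v̄_xx = 0`. -/
theorem first_best_HJB_solution
    (d : ℕ) (hd : 1 ≤ d) (σ lam : Fin d → ℝ)
    (hσ : ∀ j, 0 < σ j) (hlam : ∀ j, 0 < lam j)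
    (ε : ℝ) (hε : ε ∈ Set.Ioo (0 : ℝ) 1)
    (B : Set (Fin d → ℝ)) (hB : B = {b | ∀ j, b j ∈ Set.Icc ε 1})
    (c₂ : (Fin d → ℝ) → ℝ)
    (hc₂ : c₂ = fun b => ∑ j, (σ j) ^ 2 / lam j * (1 / b j - 1))
    (σsq : (Fin d → ℝ) → ℝ) (hσsq : σsq = fun b => ∑ j, (σ j) ^ 2 * b j)
    (Hv : ℝ → ℝ)
    (hHv : Hv = fun γ => -(1 / 2) * sInf ((fun b => c₂ b - γ * σsq b) '' B))
    (N : ℕ) (hN : 1 ≤ N) (μ : Fin N → ℝ) (hμ : ∀ i, 0 < μ i)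
    (Amax : ℝ) (hAmax : 0 < Amax)
    (A : Set (Fin N → ℝ)) (hA : A = {a | ∀ i, a i ∈ Set.Icc 0 (μ i * Amax)})
    (c₁ : (Fin N → ℝ) → ℝ) (hc₁ : c₁ = fun a => (1 / 2) * ∑ i, (a i) ^ 2 / μ i)
    (μbar : ℝ) (hμbar : μbar = ∑ i, μ i)
    (Hm : ℝ → ℝ)
    (hHm : Hm = fun z => - sInf ((fun a => z * (∑ i, a i) + c₁ a) '' A))
    (T δ h p r ρ : ℝ) (hT : 0 < T) (hh : 0 ≤ h) (hp : 0 < p) (hr : 0 < r)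
    (hρ : ρ = r * p / (r + p)) (hδT : |δ| * T ≤ Amax)
    (mFB : ℝ → ℝ)
    (hmFB : mFB = fun t =>
      (1 / 2) * μbar * (max (-δ) 0) ^ 2 * (T - t) ^ 2 + Hv (-h - ρ * δ ^ 2 * (T - t) ^ 2))
    (vb : ℝ → ℝ → ℝ)
    (hvb : vb = fun t x => δ * (T - t) * x + ∫ s in t..T, mFB s) :
    (∀ x, vb T x = 0) ∧
      (∀ t x, HasDerivAt (vb t) (δ * (T - t)) x) ∧
      (∀ t x, HasDerivAt (deriv (vb t)) 0 x) ∧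
      (∀ t ∈ Set.Ioo (0 : ℝ) T, ∀ x : ℝ,
        HasDerivAt (fun s => vb s x)
          (-(δ * x + Hm (δ * (T - t)) + Hv ((0 : ℝ) - ρ * (δ * (T - t)) ^ 2 - h))) t) := by
  -- basic facts about B
  have hε0 : (0 : ℝ) < ε := hε.1
  have hε1 : ε ≤ 1 := le_of_lt hε.2
  have hBne : B.Nonempty := ⟨fun _ => 1, by rw [hB]; intro j; exact ⟨hε1, le_refl 1⟩⟩
  set M : ℝ := ∑ j, (σ j) ^ 2 with hM
  have hM0 : 0 ≤ M := Finset.sum_nonneg fun j _ => sq_nonneg _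
  have hσsqB : ∀ b ∈ B, 0 ≤ σsq b ∧ σsq b ≤ M := by
    intro b hb
    rw [hB] at hb
    constructor
    · rw [hσsq]
      exact Finset.sum_nonneg fun j _ => mul_nonneg (sq_nonneg _)
        (le_trans hε0.le (hb j).1)
    · rw [hσsq, hM]
      refine Finset.sum_le_sum fun j _ => ?_
      have := (hb j).2
      nlinarith [sq_nonneg (σ j)]
  have hc₂B : ∀ b ∈ B, 0 ≤ c₂ b := by
    intro b hb
    rw [hB] at hb
    rw [hc₂]
    refine Finset.sum_nonneg fun j _ => ?_
    have h1 : 0 < b j := lt_of_lt_of_le hε0 (hb j).1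
    have h2 : b j ≤ 1 := (hb j).2
    have h3 : (1 : ℝ) ≤ 1 / b j := by
      rw [le_div_iff₀ h1]; linarith
    have h4 : 0 ≤ (σ j) ^ 2 / lam j := div_nonneg (sq_nonneg _) (hlam j).le
    nlinarith
  -- the infimum function defining Hv and its Lipschitz continuity
  set F : ℝ → ℝ := fun γ => sInf ((fun b => c₂ b - γ * σsq b) '' B) with hF
  have hbdd : ∀ γ : ℝ, BddBelow ((fun b => c₂ b - γ * σsq b) '' B) := by
    intro γ
    refine ⟨-(|γ| * M), ?_⟩
    rintro y ⟨b, hb, rfl⟩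
    have h1 := hσsqB b hb
    have h2 := hc₂B b hb
    have h3 : γ * σsq b ≤ |γ| * M := by
      calc γ * σsq b ≤ |γ| * σsq b := mul_le_mul_of_nonneg_right (le_abs_self γ) h1.1
        _ ≤ |γ| * M := mul_le_mul_of_nonneg_left h1.2 (abs_nonneg _)
    simp only
    linarith
  have hkey : ∀ γ₁ γ₂ : ℝ, F γ₁ ≤ F γ₂ + M * |γ₁ - γ₂| := by
    intro γ₁ γ₂
    have h : F γ₁ - M * |γ₁ - γ₂| ≤ F γ₂ := by
      refine le_csInf (hBne.image _) ?_
      rintro y ⟨b, hb, rfl⟩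
      have h1 : F γ₁ ≤ c₂ b - γ₁ * σsq b := csInf_le (hbdd γ₁) ⟨b, hb, rfl⟩
      have h2 := hσsqB b hb
      have h3 : (γ₂ - γ₁) * σsq b ≤ |γ₁ - γ₂| * M := by
        calc (γ₂ - γ₁) * σsq b ≤ |γ₂ - γ₁| * σsq b :=
              mul_le_mul_of_nonneg_right (le_abs_self _) h2.1
          _ ≤ |γ₂ - γ₁| * M := mul_le_mul_of_nonneg_left h2.2 (abs_nonneg _)
          _ = |γ₁ - γ₂| * M := by rw [abs_sub_comm]
      simp only
      linarith
    linarith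
  have hFLip : LipschitzWith (Real.toNNReal M) F := by
    apply LipschitzWith.of_dist_le_mul
    intro γ₁ γ₂
    rw [Real.dist_eq, Real.dist_eq, Real.coe_toNNReal M hM0]
    have h1 := hkey γ₁ γ₂
    have h2 := hkey γ₂ γ₁
    rw [abs_sub_comm γ₂ γ₁] at h2
    rw [abs_le]
    constructor <;> linarith
  have hHvCont : Continuous Hv := by
    rw [hHv]
    exact continuous_const.mul hFLip.continuous
  have hmFBCont : Continuous mFB := by
    rw [hmFB]
    apply Continuous.add
    · fun_prop
    · exact hHvCont.comp (by fun_prop)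
  -- value of Hm
  have hHmval : ∀ z : ℝ, max (-z) 0 ≤ Amax →
      Hm z = (1 / 2) * μbar * (max (-z) 0) ^ 2 := by
    intro z hz
    set zm := max (-z) 0 with hzm
    have hzm0 : 0 ≤ zm := le_max_right _ _
    have hzzm : z * zm = -zm ^ 2 := by
      rcases le_or_gt 0 z with hcase | hcase
      · have : zm = 0 := max_eq_right (by linarith)
        rw [this]; ring
      · have : zm = -z := max_eq_left (by linarith)
        rw [this]; ring
    have hmem : (fun i => zm * μ i) ∈ A := by
      rw [hA]; intro i
      constructor
      · exact mul_nonneg hzm0 (hμ i).le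
      · calc zm * μ i ≤ Amax * μ i := mul_le_mul_of_nonneg_right hz (hμ i).le
          _ = μ i * Amax := mul_comm _ _
    have hval : z * (∑ i, (fun i => zm * μ i) i) + c₁ (fun i => zm * μ i)
        = -((1 / 2) * μbar * zm ^ 2) := by
      simp only [hc₁, hμbar]
      have h1 : ∑ i, (zm * μ i) ^ 2 / μ i = ∑ i, zm ^ 2 * μ i := by
        refine Finset.sum_congr rfl fun i _ => ?_
        rw [div_eq_iff (hμ i).ne']
        ring
      rw [h1, ← Finset.mul_sum, ← Finset.mul_sum]
      linear_combination (∑ i, μ i) * hzzm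
    have hleast : IsLeast ((fun a => z * (∑ i, a i) + c₁ a) '' A)
        (-((1 / 2) * μbar * zm ^ 2)) := by
      constructor
      · exact ⟨_, hmem, hval⟩
      · rintro y ⟨a, ha, rfl⟩
        rw [hA] at ha
        simp only [hc₁, hμbar]
        have hterm : ∀ i ∈ Finset.univ, -((1 / 2) * μ i * zm ^ 2)
            ≤ z * a i + (1 / 2) * ((a i) ^ 2 / μ i) := by
          intro i _
          have hai := (ha i).1
          have hμi := hμ i
          have hq : (a i) ^ 2 / μ i * μ i = (a i) ^ 2 :=
            div_mul_cancel₀ _ hμi.ne'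
          rcases le_or_gt 0 z with hcase | hcase
          · have hzm' : zm = 0 := max_eq_right (by linarith)
            rw [hzm']
            have := div_nonneg (sq_nonneg (a i)) hμi.le
            nlinarith
          · have hzm' : zm = -z := max_eq_left (by linarith)
            rw [hzm']
            have h6 : -2 * z * a i - μ i * z ^ 2 ≤ (a i) ^ 2 / μ i := by
              rw [le_div_iff₀ hμi]
              nlinarith [sq_nonneg (a i + μ i * z)]
            linarith
        have hsum := Finset.sum_le_sum hterm
        have e1 : ∑ i, -((1 / 2 : ℝ) * μ i * zm ^ 2) = -(1 / 2 * (∑ i, μ i) * zm ^ 2) := by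
          rw [Finset.sum_neg_distrib, ← Finset.sum_mul, ← Finset.mul_sum]
        have e2 : ∑ i, (z * a i + (1 / 2 : ℝ) * ((a i) ^ 2 / μ i))
            = z * (∑ i, a i) + 1 / 2 * ∑ i, (a i) ^ 2 / μ i := by
          rw [Finset.sum_add_distrib, ← Finset.mul_sum, ← Finset.mul_sum]
        rw [e1, e2] at hsum
        linarith
    rw [hHm]
    simp only
    rw [hleast.csInf_eq]
    ring
  -- x-derivative
  have hx : ∀ t x, HasDerivAt (vb t) (δ * (T - t)) x := by
    intro t x
    rw [hvb]
    simpa using (((hasDerivAt_id x).const_mul (δ * (T - t))).add_const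
      (∫ s in t..T, mFB s))
  refine ⟨?_, hx, ?_, ?_⟩
  · intro x
    rw [hvb]
    simp
  · intro t x
    have hd2 : deriv (vb t) = fun _ => δ * (T - t) := funext fun y => (hx t y).deriv
    rw [hd2]
    exact hasDerivAt_const x _
  · intro t ht x
    have hTt : 0 < T - t := by linarith [ht.2]
    have hzmle : max (-(δ * (T - t))) 0 ≤ Amax := by
      have h1 : |δ * (T - t)| ≤ Amax := by
        rw [abs_mul, abs_of_pos hTt]
        calc |δ| * (T - t) ≤ |δ| * T :=
              mul_le_mul_of_nonneg_left (by linarith [ht.1]) (abs_nonneg δ)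
          _ ≤ Amax := hδT
      exact le_trans (max_le (neg_le_abs _) (abs_nonneg _)) h1
    have hHmv := hHmval (δ * (T - t)) hzmle
    have hint : HasDerivAt (fun s => ∫ u in s..T, mFB u) (-(mFB t)) t :=
      intervalIntegral.integral_hasDerivAt_left (hmFBCont.intervalIntegrable _ _)
        (hmFBCont.stronglyMeasurableAtFilter _ _) hmFBCont.continuousAt
    have hlin : HasDerivAt (fun s => δ * (T - s) * x) (δ * -1 * x) t :=
      (((hasDerivAt_id t).const_sub T).const_mul δ).mul_const x
    have htotal := hlin.add hint
    rw [hvb]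
    convert htotal using 1
    case e'_4 => rfl
    case e'_5 => rfl
    case e'_8 => rfl
    rw [hHmv]
    simp only [hmFB]
    have hmax : max (-(δ * (T - t))) 0 = max (-δ) 0 * (T - t) := by
      rw [max_mul_of_nonneg _ _ hTt.le, zero_mul, neg_mul]
    have harg : (0 : ℝ) - ρ * (δ * (T - t)) ^ 2 - h = -h - ρ * δ ^ 2 * (T - t) ^ 2 := by
      ring
    rw [harg, hmax]
    ring
end

section
/- Let T > 0, δ ∈ ℝ, h ≥ 0, p, r > 0 and μ̄ > 0. Define m_SB(t) := (1/2) μ̄ δ² (T−t)² − (1/2) inf_{z ∈ ℝ} { F₀(h + r z² + p(z − δ(T−t))²) + μ̄ (z⁻ + δ(T−t))² } and v(t,x) := δ(T−t) x + ∫_t^T m_SB(s) ds. Then the map t ↦ m_SB(t) is continuous on [0,T]; v(T, x) = 0 for all x ∈ ℝ; for each t the map x ↦ v(t,x) is affine with ∂_x v(t,x) = δ(T−t) and ∂²_{xx} v(t,x) = 0; and for every (t,x) ∈ (0,T) × ℝ the partial derivative ∂_t v(t,x) exists and satisfies −∂_t v(t,x) = δ x + (1/2) μ̄ (∂_x v(t,x))²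 − (1/2) inf_{z ∈ ℝ} { F₀( h − ∂²_{xx} v(t,x) + r z² + p(z − ∂_x v(t,x))² ) + μ̄ (z⁻ + ∂_x v(t,x))² }. In other words, v is a classical solution of the second-best HJB equation with terminal condition v(T, ·) = 0. -/
section phi

lemma aux_one_lt_u {ε : ℝ} (hε0 : 0 < ε) (hε1 : ε < 1) : 1 < (ε ^ 2)⁻¹ := by
  rw [lt_inv_comm₀ one_pos (by positivity)]
  nlinarith

lemma aux_sqrt_u {ε : ℝ} (hε0 : 0 < ε) : Real.sqrt ((ε ^ 2)⁻¹) = ε⁻¹ := by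
  rw [Real.sqrt_inv, Real.sqrt_sq hε0.le]

/-- trichotomy for the piecewise function -/
lemma phi_cases {ε : ℝ} (hε0 : 0 < ε) (hε1 : ε < 1) (x : ℝ) :
    (x ≤ 1 ∧ (if x ≤ 1 then x else if x < (ε ^ 2)⁻¹ then 2 * Real.sqrt x - 1
      else ε * x + ε⁻¹ - 1) = x)
    ∨ (1 < x ∧ x < (ε ^ 2)⁻¹ ∧ (if x ≤ 1 then x else if x < (ε ^ 2)⁻¹ then
        2 * Real.sqrt x - 1 else ε * x + ε⁻¹ - 1) = 2 * Real.sqrt x - 1)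
    ∨ ((ε ^ 2)⁻¹ ≤ x ∧ (if x ≤ 1 then x else if x < (ε ^ 2)⁻¹ then
        2 * Real.sqrt x - 1 else ε * x + ε⁻¹ - 1) = ε * x + ε⁻¹ - 1) := by
  by_cases h1 : x ≤ 1
  · exact Or.inl ⟨h1, if_pos h1⟩
  · by_cases h2 : x < (ε ^ 2)⁻¹
    · exact Or.inr (Or.inl ⟨not_le.mp h1, h2, by rw [if_neg h1, if_pos h2]⟩)
    · exact Or.inr (Or.inr ⟨not_lt.mp h2, by rw [if_neg h1, if_neg h2]⟩)

lemma phi_nonneg {ε : ℝ} (hε0 : 0 < ε) (hε1 : ε < 1) (x : ℝ) (hx : 0 ≤ x) :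
    0 ≤ (if x ≤ 1 then x else if x < (ε ^ 2)⁻¹ then 2 * Real.sqrt x - 1
      else ε * x + ε⁻¹ - 1) := by
  have hi1 : (1:ℝ) ≤ ε⁻¹ := (le_inv_comm₀ one_pos hε0).mpr (by linarith)
  rcases phi_cases hε0 hε1 x with ⟨h, he⟩ | ⟨h1, h2, he⟩ | ⟨h, he⟩ <;> rw [he]
  · exact hx
  · have : (1:ℝ) ≤ Real.sqrt x := by
      rw [show (1:ℝ) = Real.sqrt 1 by simp]
      exact Real.sqrt_le_sqrt h1.le
    linarith
  · nlinarith

lemma phi_lower {ε : ℝ} (hε0 : 0 < ε) (hε1 : ε < 1) (x : ℝ) (hx : 0 ≤ x) :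
    ε * x - 1 ≤ (if x ≤ 1 then x else if x < (ε ^ 2)⁻¹ then 2 * Real.sqrt x - 1
      else ε * x + ε⁻¹ - 1) := by
  have hi1 : (1:ℝ) ≤ ε⁻¹ := (le_inv_comm₀ one_pos hε0).mpr (by linarith)
  rcases phi_cases hε0 hε1 x with ⟨h, he⟩ | ⟨h1, h2, he⟩ | ⟨h, he⟩ <;> rw [he]
  · nlinarith
  · have hs0 : 0 ≤ Real.sqrt x := Real.sqrt_nonneg x
    have hsx : Real.sqrt x ^ 2 = x := Real.sq_sqrt hx
    have hsu : Real.sqrt x < ε⁻¹ := by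
      have := Real.sqrt_lt_sqrt hx h2
      rwa [aux_sqrt_u hε0] at this
    have : ε * Real.sqrt x < 1 := by
      have := mul_lt_mul_of_pos_left hsu hε0
      rwa [mul_inv_cancel₀ hε0.ne'] at this
    nlinarith
  · linarith

lemma phi_mono {ε : ℝ} (hε0 : 0 < ε) (hε1 : ε < 1) (a b : ℝ) (ha : 0 ≤ a) (hab : a ≤ b) :
    (if a ≤ 1 then a else if a < (ε ^ 2)⁻¹ then 2 * Real.sqrt a - 1 else ε * a + ε⁻¹ - 1)
    ≤ (if b ≤ 1 then b else if b < (ε ^ 2)⁻¹ then 2 * Real.sqrt b - 1 else ε * b + ε⁻¹ - 1) := by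
  have hb : 0 ≤ b := le_trans ha hab
  have hi1 : (1:ℝ) ≤ ε⁻¹ := (le_inv_comm₀ one_pos hε0).mpr (by linarith)
  have hie : ε * ε⁻¹ = 1 := mul_inv_cancel₀ hε0.ne'
  have hu : ((ε ^ 2)⁻¹ : ℝ) = ε⁻¹ ^ 2 := by rw [inv_pow]
  have hsa0 : 0 ≤ Real.sqrt a := Real.sqrt_nonneg a
  have hsb0 : 0 ≤ Real.sqrt b := Real.sqrt_nonneg b
  have hsa : Real.sqrt a ^ 2 = a := Real.sq_sqrt ha
  have hsb : Real.sqrt b ^ 2 = b := Real.sq_sqrt hb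
  have hsab : Real.sqrt a ≤ Real.sqrt b := Real.sqrt_le_sqrt hab
  rcases phi_cases hε0 hε1 a with ⟨ha1, hea⟩ | ⟨ha1, ha2, hea⟩ | ⟨ha1, hea⟩ <;>
    rcases phi_cases hε0 hε1 b with ⟨hb1, heb⟩ | ⟨hb1, hb2, heb⟩ | ⟨hb1, heb⟩ <;>
    rw [hea, heb]
  · exact hab
  · have : (1:ℝ) ≤ Real.sqrt b := by
      rw [show (1:ℝ) = Real.sqrt 1 by simp]
      exact Real.sqrt_le_sqrt hb1.le
    linarith
  · nlinarith
  · linarith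
  · linarith
  · -- a middle, b top : 2√a - 1 ≤ εb + ε⁻¹ - 1
    have h5 : Real.sqrt a ≤ ε⁻¹ := by
      have := Real.sqrt_le_sqrt ha2.le
      rwa [aux_sqrt_u hε0] at this
    have h6 : ε * (ε⁻¹ ^ 2) = ε⁻¹ := by rw [sq, ← mul_assoc, hie, one_mul]
    nlinarith [mul_le_mul_of_nonneg_left (hu ▸ hb1) hε0.le]
  · linarith [aux_one_lt_u hε0 hε1]
  · linarith
  · nlinarith

lemma phi_lip {ε : ℝ} (hε0 : 0 < ε) (hε1 : ε < 1) (a b : ℝ) (ha : 0 ≤ a) (hab : a ≤ b) :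
    (if b ≤ 1 then b else if b < (ε ^ 2)⁻¹ then 2 * Real.sqrt b - 1 else ε * b + ε⁻¹ - 1)
    - (if a ≤ 1 then a else if a < (ε ^ 2)⁻¹ then 2 * Real.sqrt a - 1 else ε * a + ε⁻¹ - 1)
    ≤ b - a := by
  have hb : 0 ≤ b := le_trans ha hab
  have hi1 : (1:ℝ) ≤ ε⁻¹ := (le_inv_comm₀ one_pos hε0).mpr (by linarith)
  have hie : ε * ε⁻¹ = 1 := mul_inv_cancel₀ hε0.ne'
  have hu : ((ε ^ 2)⁻¹ : ℝ) = ε⁻¹ ^ 2 := by rw [inv_pow]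
  have h7 : ε * ε⁻¹ ^ 2 = ε⁻¹ := by rw [sq, ← mul_assoc, hie, one_mul]
  have hsa0 : 0 ≤ Real.sqrt a := Real.sqrt_nonneg a
  have hsb0 : 0 ≤ Real.sqrt b := Real.sqrt_nonneg b
  have hsa : Real.sqrt a ^ 2 = a := Real.sq_sqrt ha
  have hsb : Real.sqrt b ^ 2 = b := Real.sq_sqrt hb
  have hsab : Real.sqrt a ≤ Real.sqrt b := Real.sqrt_le_sqrt hab
  rcases phi_cases hε0 hε1 a with ⟨ha1, hea⟩ | ⟨ha1, ha2, hea⟩ | ⟨ha1, hea⟩ <;>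
    rcases phi_cases hε0 hε1 b with ⟨hb1, heb⟩ | ⟨hb1, hb2, heb⟩ | ⟨hb1, heb⟩ <;>
    rw [hea, heb]
  · -- a ≤ 1, b middle : 2√b − 1 − a ≤ b − a
    nlinarith [sq_nonneg (Real.sqrt b - 1)]
  · -- a ≤ 1, b top
    have hub : ε⁻¹ ^ 2 ≤ b := by rw [← hu]; exact hb1
    nlinarith [mul_le_mul_of_nonneg_left hub (by linarith : (0:ℝ) ≤ 1 - ε),
      sq_nonneg (ε⁻¹ - 1)]
  · -- a middle, b ≤ 1 : impossible
    linarith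
  · -- both middle
    have h1a : (1:ℝ) ≤ Real.sqrt a := by
      rw [show (1:ℝ) = Real.sqrt 1 by simp]
      exact Real.sqrt_le_sqrt ha1.le
    nlinarith [mul_le_mul_of_nonneg_left (show (2:ℝ) ≤ Real.sqrt a + Real.sqrt b by linarith)
      (sub_nonneg.mpr hsab)]
  · -- a middle, b top
    have hub : ε⁻¹ ^ 2 ≤ b := by rw [← hu]; exact hb1
    have hsau : Real.sqrt a ≤ ε⁻¹ := by
      have := Real.sqrt_le_sqrt ha2.le
      rwa [aux_sqrt_u hε0] at this
    have h1a : (1:ℝ) ≤ Real.sqrt a := by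
      rw [show (1:ℝ) = Real.sqrt 1 by simp]
      exact Real.sqrt_le_sqrt ha1.le
    nlinarith [mul_le_mul_of_nonneg_left hub (by linarith : (0:ℝ) ≤ 1 - ε), h7,
      mul_nonneg (sub_nonneg.mpr hsau) (by linarith : (0:ℝ) ≤ ε⁻¹ + Real.sqrt a - 2)]
  · -- a top, b ≤ 1 : impossible
    linarith [aux_one_lt_u hε0 hε1]
  · -- a top, b middle : impossible
    linarith
  · -- both top
    nlinarith [mul_nonneg (by linarith : (0:ℝ) ≤ 1 - ε) (sub_nonneg.mpr hab)]

lemma phi_cont {ε : ℝ} (hε0 : 0 < ε) (hε1 : ε < 1) :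
    Continuous (fun x : ℝ => if x ≤ 1 then x else if x < (ε ^ 2)⁻¹ then 2 * Real.sqrt x - 1
      else ε * x + ε⁻¹ - 1) := by
  have h1u : (1:ℝ) < (ε ^ 2)⁻¹ := aux_one_lt_u hε0 hε1
  have hinner : Continuous (fun x : ℝ => if x < (ε ^ 2)⁻¹ then 2 * Real.sqrt x - 1
      else ε * x + ε⁻¹ - 1) := by
    have he : (fun x : ℝ => if x < (ε ^ 2)⁻¹ then 2 * Real.sqrt x - 1 else ε * x + ε⁻¹ - 1)
        = fun x : ℝ => if (ε ^ 2)⁻¹ ≤ x then ε * x + ε⁻¹ - 1 else 2 * Real.sqrt x - 1 := by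
      funext x
      rcases lt_or_ge x ((ε ^ 2)⁻¹) with h | h
      · rw [if_pos h, if_neg (not_le.mpr h)]
      · rw [if_neg (not_lt.mpr h), if_pos h]
    rw [he]
    refine Continuous.if_le ?_ ?_ continuous_const continuous_id ?_
    · continuity
    · continuity
    · intro x hx
      change (ε ^ 2)⁻¹ = x at hx
      subst hx
      rw [aux_sqrt_u hε0]
      have h6 : ε * (ε^2)⁻¹ = ε⁻¹ := by
        rw [sq]
        field_simp
      rw [h6]; ring
  refine Continuous.if_le continuous_id hinner continuous_id continuous_const ?_
  intro x hx
  change x = 1 at hx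
  subst hx
  rw [if_pos h1u, Real.sqrt_one]
  norm_num

end phi

section F0aux

variable {d : ℕ} {σ lam : Fin d → ℝ} {ε : ℝ} {φ F₀ : ℝ → ℝ}
variable (hσ : ∀ j, 0 < σ j) (hlam : ∀ j, 0 < lam j)
  (hε0 : 0 < ε) (hε1 : ε < 1)
  (hφ : φ = fun x =>
      if x ≤ 1 then x else if x < (ε ^ 2)⁻¹ then 2 * Real.sqrt x - 1 else ε * x + ε⁻¹ - 1)
  (hF₀ : F₀ = fun q => ∑ j, (σ j) ^ 2 / lam j * φ (lam j * q))

include hσ hlam hε0 hε1 hφ hF₀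

lemma F0_nonneg' (q : ℝ) (hq : 0 ≤ q) : 0 ≤ F₀ q := by
  subst hF₀ hφ
  apply Finset.sum_nonneg
  intro j _
  have h1 := (hlam j).le
  have h2 := (hσ j)
  exact mul_nonneg (by positivity) (phi_nonneg hε0 hε1 _ (by positivity))

lemma F0_mono' (q q' : ℝ) (hq : 0 ≤ q) (hqq : q ≤ q') : F₀ q ≤ F₀ q' := by
  subst hF₀ hφ
  apply Finset.sum_le_sum
  intro j _
  have h1 := hlam j
  have h2 := hσ j
  exact mul_le_mul_of_nonneg_left
    (phi_mono hε0 hε1 _ _ (by positivity) (by nlinarith)) (by positivity)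

lemma F0_lower' (q : ℝ) (hq : 0 ≤ q) :
    ε * (∑ j, σ j ^ 2) * q - (∑ j, σ j ^ 2 / lam j) ≤ F₀ q := by
  subst hF₀ hφ
  have key : ∀ j ∈ Finset.univ, ε * σ j ^ 2 * q - σ j ^ 2 / lam j
      ≤ σ j ^ 2 / lam j * (if lam j * q ≤ 1 then lam j * q else
        if lam j * q < (ε ^ 2)⁻¹ then 2 * Real.sqrt (lam j * q) - 1
        else ε * (lam j * q) + ε⁻¹ - 1) := by
    intro j _
    have h1 := hlam j
    have h2 := hσ j
    have h3 := phi_lower hε0 hε1 (lam j * q) (by positivity)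
    have h4 : σ j ^ 2 / lam j * (ε * (lam j * q) - 1)
        ≤ σ j ^ 2 / lam j * (if lam j * q ≤ 1 then lam j * q else
          if lam j * q < (ε ^ 2)⁻¹ then 2 * Real.sqrt (lam j * q) - 1
          else ε * (lam j * q) + ε⁻¹ - 1) :=
      mul_le_mul_of_nonneg_left h3 (by positivity)
    have h5 : σ j ^ 2 / lam j * (ε * (lam j * q) - 1) = ε * σ j ^ 2 * q - σ j ^ 2 / lam j := by
      field_simp
    linarith
  calc ε * (∑ j, σ j ^ 2) * q - (∑ j, σ j ^ 2 / lam j)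
      = ∑ j, (ε * σ j ^ 2 * q - σ j ^ 2 / lam j) := by
        rw [Finset.mul_sum, Finset.sum_mul, ← Finset.sum_sub_distrib]
    _ ≤ _ := Finset.sum_le_sum key

lemma F0_lip' (q q' : ℝ) (hq : 0 ≤ q) (hq' : 0 ≤ q') :
    |F₀ q - F₀ q'| ≤ (∑ j, σ j ^ 2) * |q - q'| := by
  have main : ∀ a b : ℝ, 0 ≤ a → a ≤ b → F₀ b - F₀ a ≤ (∑ j, σ j ^ 2) * (b - a) := by
    intro a b ha hab
    subst hF₀ hφ
    rw [← Finset.sum_sub_distrib, Finset.sum_mul]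
    apply Finset.sum_le_sum
    intro j _
    have h1 := hlam j
    have h2 := hσ j
    rw [← mul_sub]
    have h3 := phi_lip hε0 hε1 (lam j * a) (lam j * b) (by positivity)
      (by nlinarith)
    calc σ j ^ 2 / lam j * _ ≤ σ j ^ 2 / lam j * (lam j * b - lam j * a) :=
          mul_le_mul_of_nonneg_left h3 (by positivity)
      _ = σ j ^ 2 * (b - a) := by field_simp
  have hmono := F0_mono' hσ hlam hε0 hε1 hφ hF₀
  rcases le_total q q' with hle | hle
  · rw [abs_sub_comm, abs_of_nonneg (by linarith [hmono q q' hq hle]),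
      abs_sub_comm, abs_of_nonneg (by linarith)]
    exact main q q' hq hle
  · rw [abs_of_nonneg (by linarith [hmono q' q hq' hle]), abs_of_nonneg (by linarith)]
    exact main q' q hq' hle

lemma F0_cont' : Continuous F₀ := by
  subst hF₀
  apply continuous_finset_sum
  intro j _
  apply Continuous.mul continuous_const
  have : Continuous φ := by rw [hφ]; exact phi_cont hε0 hε1
  exact this.comp (continuous_const.mul continuous_id)

end F0aux

/-- Abstract continuity of a parametrized infimum. -/
lemma continuousAt_sInf_range {g : ℝ → ℝ → ℝ} {t0 M L : ℝ} (hL : 0 ≤ L)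
    (hbd : ∀ t z, 0 ≤ g t z)
    (key : ∀ t, |t - t0| ≤ 1 → ∀ z : ℝ, M < |z| →
      sInf (Set.range (g t)) + 1 ≤ g t z)
    (lip : ∀ t, |t - t0| ≤ 1 → ∀ z : ℝ, |z| ≤ M → |g t z - g t0 z| ≤ L * |t - t0|) :
    ContinuousAt (fun t => sInf (Set.range (g t))) t0 := by
  have hbdd : ∀ t, BddBelow (Set.range (g t)) := fun t =>
    ⟨0, fun y ⟨z, hz⟩ => hz ▸ hbd t z⟩
  have hJle : ∀ t z, sInf (Set.range (g t)) ≤ g t z :=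
    fun t z => csInf_le (hbdd t) ⟨z, rfl⟩
  have approx : ∀ t, |t - t0| ≤ 1 → ∀ η : ℝ, 0 < η → η ≤ 1 →
      ∃ z : ℝ, |z| ≤ M ∧ g t z < sInf (Set.range (g t)) + η := by
    intro t ht η hη hη1
    obtain ⟨y, hmem, hy⟩ :=
      Real.lt_sInf_add_pos (s := Set.range (g t)) (Set.range_nonempty _) hη
    obtain ⟨z, rfl⟩ := hmem
    refine ⟨z, ?_, hy⟩
    by_contra hz
    push_neg at hz
    have := key t ht z hz
    linarith
  have dir : ∀ t, |t - t0| ≤ 1 →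
      sInf (Set.range (g t)) ≤ sInf (Set.range (g t0)) + L * |t - t0| ∧
      sInf (Set.range (g t0)) ≤ sInf (Set.range (g t)) + L * |t - t0| := by
    intro t ht
    constructor
    · refine le_of_forall_pos_le_add fun η hη => ?_
      obtain ⟨z, hzM, hz⟩ := approx t0 (by simp) (min η 1) (lt_min hη one_pos) (min_le_right _ _)
      have hlip := lip t ht z hzM
      have h1 : g t z ≤ g t0 z + L * |t - t0| := by
        have := abs_sub_le_iff.mp hlip
        linarith [this.1]
      have h2 : sInf (Set.range (g t)) ≤ g t z := hJle t z
      have hm : min η 1 ≤ η := min_le_left _ _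
      linarith
    · refine le_of_forall_pos_le_add fun η hη => ?_
      obtain ⟨z, hzM, hz⟩ := approx t ht (min η 1) (lt_min hη one_pos) (min_le_right _ _)
      have hlip := lip t ht z hzM
      have h1 : g t0 z ≤ g t z + L * |t - t0| := by
        have := abs_sub_le_iff.mp hlip
        linarith [this.2]
      have h2 : sInf (Set.range (g t0)) ≤ g t0 z := hJle t0 z
      have hm : min η 1 ≤ η := min_le_left _ _
      linarith
  apply continuousAt_of_locally_lipschitz one_pos L
  intro y hy
  rw [Real.dist_eq, Real.dist_eq]
  have hy1 : |y - t0| ≤ 1 := by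
    rw [Real.dist_eq] at hy; linarith
  obtain ⟨h1, h2⟩ := dir y hy1
  rw [abs_sub_le_iff]
  constructor <;> linarith


lemma sq_le_of_abs_le' {x y : ℝ} (hxy : |x| ≤ y) : x ^ 2 ≤ y ^ 2 := by
  nlinarith [sq_abs x, abs_nonneg x]

lemma abs_sq_sub_sq' (a b : ℝ) : |a ^ 2 - b ^ 2| ≤ |a - b| * (|a| + |b|) := by
  rw [show a ^ 2 - b ^ 2 = (a - b) * (a + b) by ring, abs_mul]
  exact mul_le_mul_of_nonneg_left (abs_add_le a b) (abs_nonneg _)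

set_option maxHeartbeats 1000000 in
/-- The function `v(t,x) = δ(T−t)x + ∫_t^T m_SB(s) ds`, with
`m_SB(t) = (1/2)μ̄δ²(T−t)² − (1/2) inf_z { F₀(h + rz² + p(z−δ(T−t))²) + μ̄(z⁻+δ(T−t))² }`,
is a classical solution of the second-best HJB equation with terminal condition `v(T,·)=0`;
moreover `m_SB` is continuous on `[0,T]`, `v_x(t,x) = δ(T−t)`, `v_xx = 0`. -/
theorem second_best_HJB_solution
    (d : ℕ) (hd : 1 ≤ d) (σ lam : Fin d → ℝ)
    (hσ : ∀ j, 0 < σ j) (hlam : ∀ j, 0 < lam j)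
    (ε : ℝ) (hε : ε ∈ Set.Ioo (0 : ℝ) 1)
    (φ : ℝ → ℝ)
    (hφ : φ = fun x =>
      if x ≤ 1 then x else if x < (ε ^ 2)⁻¹ then 2 * Real.sqrt x - 1 else ε * x + ε⁻¹ - 1)
    (F₀ : ℝ → ℝ) (hF₀ : F₀ = fun q => ∑ j, (σ j) ^ 2 / lam j * φ (lam j * q))
    (T δ h p r μbar : ℝ) (hT : 0 < T) (hh : 0 ≤ h) (hp : 0 < p) (hr : 0 < r)
    (hμbar : 0 < μbar)
    (mSB : ℝ → ℝ)
    (hmSB : mSB = fun t =>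
      (1 / 2) * μbar * δ ^ 2 * (T - t) ^ 2 -
        (1 / 2) * sInf (Set.range fun z : ℝ =>
          F₀ (h + r * z ^ 2 + p * (z - δ * (T - t)) ^ 2) +
            μbar * (max (-z) 0 + δ * (T - t)) ^ 2))
    (v : ℝ → ℝ → ℝ)
    (hv : v = fun t x => δ * (T - t) * x + ∫ s in t..T, mSB s) :
    ContinuousOn mSB (Set.Icc 0 T) ∧
      (∀ x, v T x = 0) ∧
      (∀ t x, HasDerivAt (v t) (δ * (T - t)) x) ∧
      (∀ t x, HasDerivAt (deriv (v t)) 0 x) ∧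
      (∀ t ∈ Set.Ioo (0 : ℝ) T, ∀ x : ℝ,
        HasDerivAt (fun s => v s x)
          (-(δ * x + (1 / 2) * μbar * (δ * (T - t)) ^ 2 -
              (1 / 2) * sInf (Set.range fun z : ℝ =>
                F₀ (h - 0 + r * z ^ 2 + p * (z - δ * (T - t)) ^ 2) +
                  μbar * (max (-z) 0 + δ * (T - t)) ^ 2))) t) := by
  obtain ⟨hε0, hε1⟩ := hε
  have hne : Nonempty (Fin d) := ⟨⟨0, hd⟩⟩
  have hS : 0 < ∑ j, σ j ^ 2 :=
    Finset.sum_pos (fun j _ => pow_pos (hσ j) 2) Finset.univ_nonempty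
  have hC : 0 ≤ ∑ j, σ j ^ 2 / lam j :=
    Finset.sum_nonneg fun j _ => div_nonneg (sq_nonneg _) (hlam j).le
  -- the parametrized function
  set g : ℝ → ℝ → ℝ := fun t z =>
    F₀ (h + r * z ^ 2 + p * (z - δ * (T - t)) ^ 2) +
      μbar * (max (-z) 0 + δ * (T - t)) ^ 2 with hg
  have hqnn : ∀ t z : ℝ, 0 ≤ h + r * z ^ 2 + p * (z - δ * (T - t)) ^ 2 := by
    intro t z
    have : 0 ≤ r * z ^ 2 := by positivity
    have : 0 ≤ p * (z - δ * (T - t)) ^ 2 := by positivity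
    linarith
  have hGnn : ∀ t z, 0 ≤ g t z := by
    intro t z
    have h1 : 0 ≤ F₀ (h + r * z ^ 2 + p * (z - δ * (T - t)) ^ 2) :=
      F0_nonneg' hσ hlam hε0 hε1 hφ hF₀ _ (hqnn t z)
    have h2 : 0 ≤ μbar * (max (-z) 0 + δ * (T - t)) ^ 2 := by positivity
    simp only [hg]
    linarith
  have hmaxz : ∀ z : ℝ, max (-z) 0 ≤ |z| := fun z => max_le (neg_le_abs z) (abs_nonneg z)
  -- continuity of the infimum
  have hJcont : Continuous (fun t => sInf (Set.range (g t))) := by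
    rw [continuous_iff_continuousAt]
    intro t0
    set R : ℝ := |T - t0| + 1 with hR
    have hR0 : 0 < R := by positivity
    set B : ℝ := F₀ (h + p * δ ^ 2 * R ^ 2) + μbar * δ ^ 2 * R ^ 2 with hB
    have hB0 : 0 ≤ B := by
      have h1 : 0 ≤ F₀ (h + p * δ ^ 2 * R ^ 2) :=
        F0_nonneg' hσ hlam hε0 hε1 hφ hF₀ _ (by positivity)
      have h2 : 0 ≤ μbar * δ ^ 2 * R ^ 2 := by positivity
      linarith
    set C : ℝ := ∑ j, σ j ^ 2 / lam j with hCdef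
    set S : ℝ := ∑ j, σ j ^ 2 with hSdef
    set M : ℝ := Real.sqrt ((B + 1 + C) / (ε * S * r)) with hM
    have hM0 : 0 ≤ M := Real.sqrt_nonneg _
    have hM2 : M ^ 2 = (B + 1 + C) / (ε * S * r) :=
      Real.sq_sqrt (by positivity)
    set L : ℝ := (S * p + μbar) * |δ| * (2 * M + 2 * |δ| * R) with hL
    have hL0 : 0 ≤ L := by positivity
    -- |T - t| ≤ R for |t - t0| ≤ 1
    have hTt : ∀ t : ℝ, |t - t0| ≤ 1 → |T - t| ≤ R := by
      intro t ht
      have he : T - t = (T - t0) + (t0 - t) := by ring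
      rw [he]
      calc |(T - t0) + (t0 - t)| ≤ |T - t0| + |t0 - t| := abs_add_le _ _
        _ ≤ |T - t0| + 1 := by rw [abs_sub_comm t0 t]; linarith
    have hbdd : ∀ t, BddBelow (Set.range (g t)) := fun t =>
      ⟨0, fun y ⟨z, hz⟩ => hz ▸ hGnn t z⟩
    -- key coercivity property
    have key : ∀ t, |t - t0| ≤ 1 → ∀ z : ℝ, M < |z| →
        sInf (Set.range (g t)) + 1 ≤ g t z := by
      intro t ht z hz
      have hTtR := hTt t ht
      have hd2 : (T - t) ^ 2 ≤ R ^ 2 := sq_le_of_abs_le' hTtR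
      -- g t 0 ≤ B
      have hg0 : g t 0 ≤ B := by
        simp only [hg, hB]
        have e1 : max (-(0:ℝ)) 0 = 0 := by norm_num
        rw [e1]
        have h1 : h + r * 0 ^ 2 + p * (0 - δ * (T - t)) ^ 2 ≤ h + p * δ ^ 2 * R ^ 2 := by
          nlinarith [mul_le_mul_of_nonneg_left hd2 (mul_nonneg hp.le (sq_nonneg δ))]
        have h2 : F₀ (h + r * 0 ^ 2 + p * (0 - δ * (T - t)) ^ 2) ≤ F₀ (h + p * δ ^ 2 * R ^ 2) :=
          F0_mono' hσ hlam hε0 hε1 hφ hF₀ _ _ (hqnn t 0) h1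
        have h3 : μbar * (0 + δ * (T - t)) ^ 2 ≤ μbar * δ ^ 2 * R ^ 2 := by
          nlinarith [mul_le_mul_of_nonneg_left hd2 (mul_nonneg hμbar.le (sq_nonneg δ))]
        linarith
      have hinf : sInf (Set.range (g t)) ≤ B :=
        le_trans (csInf_le (hbdd t) ⟨0, rfl⟩) hg0
      -- lower bound on g t z
      have hz2 : M ^ 2 ≤ z ^ 2 := by
        have h1 : |M| ≤ |z| := by rw [abs_of_nonneg hM0]; exact hz.le
        have h2 := sq_le_of_abs_le' h1
        rwa [sq_abs] at h2
      have hlow1 : ε * S * (r * z ^ 2) - C ≤ F₀ (r * z ^ 2) :=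
        F0_lower' hσ hlam hε0 hε1 hφ hF₀ _ (by positivity)
      have hlow2 : F₀ (r * z ^ 2) ≤ F₀ (h + r * z ^ 2 + p * (z - δ * (T - t)) ^ 2) := by
        apply F0_mono' hσ hlam hε0 hε1 hφ hF₀ _ _ (by positivity)
        have : 0 ≤ p * (z - δ * (T - t)) ^ 2 := by positivity
        linarith
      have hlow3 : B + 1 ≤ ε * S * (r * z ^ 2) - C := by
        have hESr : 0 < ε * S * r := by positivity
        have h5 : ε * S * r * M ^ 2 = B + 1 + C := by
          rw [hM2]
          field_simp
        nlinarith [mul_le_mul_of_nonneg_left hz2 hESr.le]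
      have hgz : B + 1 ≤ g t z := by
        simp only [hg]
        have h4 : 0 ≤ μbar * (max (-z) 0 + δ * (T - t)) ^ 2 := by positivity
        nlinarith
      linarith
    -- Lipschitz property
    have lip : ∀ t, |t - t0| ≤ 1 → ∀ z : ℝ, |z| ≤ M →
        |g t z - g t0 z| ≤ L * |t - t0| := by
      intro t ht z hzM
      have hTtR := hTt t ht
      have hTt0R : |T - t0| ≤ R := by rw [hR]; linarith
      set c : ℝ := z - δ * (T - t) with hc
      set e : ℝ := z - δ * (T - t0) with he
      set a : ℝ := max (-z) 0 + δ * (T - t) with ha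
      set b : ℝ := max (-z) 0 + δ * (T - t0) with hb2
      have hq1 := hqnn t z
      have hq2 := hqnn t0 z
      have hFd : |F₀ (h + r * z ^ 2 + p * c ^ 2) - F₀ (h + r * z ^ 2 + p * e ^ 2)|
          ≤ S * |(h + r * z ^ 2 + p * c ^ 2) - (h + r * z ^ 2 + p * e ^ 2)| :=
        F0_lip' hσ hlam hε0 hε1 hφ hF₀ _ _ hq1 hq2
      have hce : c - e = δ * (t - t0) := by rw [hc, he]; ring
      have hab : a - b = δ * (t0 - t) := by rw [ha, hb2]; ring
      have hcbound : |c| ≤ M + |δ| * R := by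
        rw [hc]
        calc |z - δ * (T - t)| ≤ |z| + |δ * (T - t)| := abs_sub _ _
          _ = |z| + |δ| * |T - t| := by rw [abs_mul]
          _ ≤ M + |δ| * R := by
              have := mul_le_mul_of_nonneg_left hTtR (abs_nonneg δ)
              linarith
      have hebound : |e| ≤ M + |δ| * R := by
        rw [he]
        calc |z - δ * (T - t0)| ≤ |z| + |δ * (T - t0)| := abs_sub _ _
          _ = |z| + |δ| * |T - t0| := by rw [abs_mul]
          _ ≤ M + |δ| * R := by
              have := mul_le_mul_of_nonneg_left hTt0R (abs_nonneg δ)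
              linarith
      have habound : |a| ≤ M + |δ| * R := by
        rw [ha]
        calc |max (-z) 0 + δ * (T - t)| ≤ |max (-z) 0| + |δ * (T - t)| := abs_add_le _ _
          _ = max (-z) 0 + |δ| * |T - t| := by
              rw [abs_of_nonneg (le_max_right _ _), abs_mul]
          _ ≤ M + |δ| * R := by
              have h1 := le_trans (hmaxz z) hzM
              have := mul_le_mul_of_nonneg_left hTtR (abs_nonneg δ)
              linarith
      have hbbound : |b| ≤ M + |δ| * R := by
        rw [hb2]
        calc |max (-z) 0 + δ * (T - t0)| ≤ |max (-z) 0| + |δ * (T - t0)| := abs_add_le _ _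
          _ = max (-z) 0 + |δ| * |T - t0| := by
              rw [abs_of_nonneg (le_max_right _ _), abs_mul]
          _ ≤ M + |δ| * R := by
              have h1 := le_trans (hmaxz z) hzM
              have := mul_le_mul_of_nonneg_left hTt0R (abs_nonneg δ)
              linarith
      -- |c² - e²| and |a² - b²|
      have hX : |c ^ 2 - e ^ 2| ≤ |δ| * |t - t0| * (2 * M + 2 * |δ| * R) := by
        calc |c ^ 2 - e ^ 2| ≤ |c - e| * (|c| + |e|) := abs_sq_sub_sq' c e
          _ ≤ |c - e| * (2 * M + 2 * |δ| * R) := by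
              apply mul_le_mul_of_nonneg_left _ (abs_nonneg _)
              linarith
          _ = |δ| * |t - t0| * (2 * M + 2 * |δ| * R) := by
              rw [hce, abs_mul]
      have hY : |a ^ 2 - b ^ 2| ≤ |δ| * |t - t0| * (2 * M + 2 * |δ| * R) := by
        calc |a ^ 2 - b ^ 2| ≤ |a - b| * (|a| + |b|) := abs_sq_sub_sq' a b
          _ ≤ |a - b| * (2 * M + 2 * |δ| * R) := by
              apply mul_le_mul_of_nonneg_left _ (abs_nonneg _)
              linarith
          _ = |δ| * |t - t0| * (2 * M + 2 * |δ| * R) := by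
              rw [hab, abs_mul, abs_sub_comm t0 t]
      -- assemble
      have hdecomp : g t z - g t0 z =
          (F₀ (h + r * z ^ 2 + p * c ^ 2) - F₀ (h + r * z ^ 2 + p * e ^ 2)) +
            μbar * (a ^ 2 - b ^ 2) := by
        simp only [hg, hc, he, ha, hb2]
        ring
      have habs : |g t z - g t0 z| ≤
          |F₀ (h + r * z ^ 2 + p * c ^ 2) - F₀ (h + r * z ^ 2 + p * e ^ 2)| +
            μbar * |a ^ 2 - b ^ 2| := by
        rw [hdecomp]
        calc |_ + μbar * (a ^ 2 - b ^ 2)| ≤ _ + |μbar * (a ^ 2 - b ^ 2)| := abs_add_le _ _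
          _ = _ + μbar * |a ^ 2 - b ^ 2| := by rw [abs_mul, abs_of_pos hμbar]
      have hq12 : |(h + r * z ^ 2 + p * c ^ 2) - (h + r * z ^ 2 + p * e ^ 2)|
          = p * |c ^ 2 - e ^ 2| := by
        rw [show (h + r * z ^ 2 + p * c ^ 2) - (h + r * z ^ 2 + p * e ^ 2)
          = p * (c ^ 2 - e ^ 2) by ring, abs_mul, abs_of_pos hp]
      have hF2 : |F₀ (h + r * z ^ 2 + p * c ^ 2) - F₀ (h + r * z ^ 2 + p * e ^ 2)|
          ≤ S * p * (|δ| * |t - t0| * (2 * M + 2 * |δ| * R)) := by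
        rw [hq12] at hFd
        calc |F₀ (h + r * z ^ 2 + p * c ^ 2) - F₀ (h + r * z ^ 2 + p * e ^ 2)|
            ≤ S * (p * |c ^ 2 - e ^ 2|) := hFd
          _ ≤ S * p * (|δ| * |t - t0| * (2 * M + 2 * |δ| * R)) := by
              rw [← mul_assoc]
              exact mul_le_mul_of_nonneg_left hX (by positivity)
      have hF3 : μbar * |a ^ 2 - b ^ 2|
          ≤ μbar * (|δ| * |t - t0| * (2 * M + 2 * |δ| * R)) :=
        mul_le_mul_of_nonneg_left hY hμbar.le
      have : L * |t - t0| = S * p * (|δ| * |t - t0| * (2 * M + 2 * |δ| * R))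
          + μbar * (|δ| * |t - t0| * (2 * M + 2 * |δ| * R)) := by
        rw [hL]; ring
      linarith
    exact continuousAt_sInf_range hL0 hGnn key lip
  -- continuity of mSB
  have hmSBc : Continuous mSB := by
    rw [hmSB]
    have h1 : Continuous fun t : ℝ => (1 / 2) * μbar * δ ^ 2 * (T - t) ^ 2 := by continuity
    exact h1.sub (continuous_const.mul hJcont)
  -- derivative in x
  have hvx : ∀ t x, HasDerivAt (v t) (δ * (T - t)) x := by
    intro t x
    rw [hv]
    simpa using ((hasDerivAt_id x).const_mul (δ * (T - t))).add_const (∫ s in t..T, mSB s)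
  refine ⟨hmSBc.continuousOn, ?_, hvx, ?_, ?_⟩
  · intro x
    rw [hv]
    simp
  · intro t x
    have hde : deriv (v t) = fun _ => δ * (T - t) := funext fun y => (hvx t y).deriv
    rw [hde]
    exact hasDerivAt_const x (δ * (T - t))
  · intro t ht x
    simp only [sub_zero]
    have h1 : HasDerivAt (fun s => δ * (T - s) * x) (-(δ * x)) t := by
      have := (((hasDerivAt_id t).const_sub T).const_mul δ).mul_const x
      simpa using this
    have h2 : HasDerivAt (fun s => ∫ u in s..T, mSB u) (-(mSB t)) t :=
      intervalIntegral.integral_hasDerivAt_left (hmSBc.intervalIntegrable _ _)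
        (hmSBc.stronglyMeasurableAtFilter _ _) hmSBc.continuousAt
    have h3 : HasDerivAt (fun s => δ * (T - s) * x + ∫ u in s..T, mSB u) (-(δ * x) + -(mSB t)) t :=
      h1.add h2
    rw [hv]
    convert h3 using 1
    simp only [hmSB]
    ring
end

section
/- Let h ≥ 0, p, r > 0, μ̄ > 0 and c ≤ 0. The function G(z) := F₀(h + r z² + p(z − c)²) + μ̄ (z⁻ + c)² attains its infimum over ℝ, and every minimiser z* of G satisfies c ≤ z* ≤ (p/(r+p)) c. -/
lemma phiStrictMono (ε : ℝ) (h0 : 0 < ε) (h1 : ε < 1) :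
    StrictMono (fun x : ℝ =>
      if x ≤ 1 then x else if x < (ε ^ 2)⁻¹ then 2 * Real.sqrt x - 1 else ε * x + ε⁻¹ - 1) := by
  have hεinv : 1 < ε⁻¹ := (one_lt_inv₀ h0).mpr h1
  have hinv : (1:ℝ) < (ε ^ 2)⁻¹ := by
    rw [one_lt_inv₀ (pow_pos h0 2)]; nlinarith
  have hsq : Real.sqrt ((ε ^ 2)⁻¹) = ε⁻¹ := by
    rw [Real.sqrt_inv, Real.sqrt_sq h0.le]
  have hei : ε * (ε ^ 2)⁻¹ = ε⁻¹ := by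
    field_simp
  intro a b hab
  simp only
  split_ifs with ha hb hb2 ha2 hb3 hb4 <;> try linarith
  · -- a ≤ 1, b middle : a < 2√b - 1
    have h1b : (1:ℝ) < b := by linarith
    have : Real.sqrt 1 < Real.sqrt b := Real.sqrt_lt_sqrt zero_le_one h1b
    rw [Real.sqrt_one] at this
    linarith
  · -- a ≤ 1, b tail
    have hb' : (ε ^ 2)⁻¹ ≤ b := by linarith
    have : ε⁻¹ ≤ ε * b := by
      calc ε⁻¹ = ε * (ε ^ 2)⁻¹ := hei.symm
      _ ≤ ε * b := by nlinarith
    linarith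
  · -- both middle
    have : Real.sqrt a < Real.sqrt b := Real.sqrt_lt_sqrt (by linarith) hab
    linarith
  · -- a middle, b tail
    have hsb : Real.sqrt a < ε⁻¹ := by
      rw [← hsq]; exact Real.sqrt_lt_sqrt (by linarith) ha2
    have : ε⁻¹ ≤ ε * b := by
      calc ε⁻¹ = ε * (ε ^ 2)⁻¹ := hei.symm
      _ ≤ ε * b := by nlinarith
    linarith
  · -- both tail
    nlinarith

lemma phiCont (ε : ℝ) (h0 : 0 < ε) (h1 : ε < 1) :
    Continuous (fun x : ℝ =>
      if x ≤ 1 then x else if x < (ε ^ 2)⁻¹ then 2 * Real.sqrt x - 1 else ε * x + ε⁻¹ - 1) := by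
  have hinv : (1:ℝ) < (ε ^ 2)⁻¹ := by
    rw [one_lt_inv₀ (pow_pos h0 2)]; nlinarith
  have hsq : Real.sqrt ((ε ^ 2)⁻¹) = ε⁻¹ := by
    rw [Real.sqrt_inv, Real.sqrt_sq h0.le]
  have hei : ε * (ε ^ 2)⁻¹ = ε⁻¹ := by field_simp
  have hinner : Continuous (fun x : ℝ =>
      if x < (ε ^ 2)⁻¹ then 2 * Real.sqrt x - 1 else ε * x + ε⁻¹ - 1) := by
    have : (fun x : ℝ => if x < (ε ^ 2)⁻¹ then 2 * Real.sqrt x - 1 else ε * x + ε⁻¹ - 1)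
        = fun x : ℝ => if (ε ^ 2)⁻¹ ≤ x then ε * x + ε⁻¹ - 1 else 2 * Real.sqrt x - 1 := by
      funext x
      rcases lt_or_ge x ((ε ^ 2)⁻¹) with hx | hx
      · rw [if_pos hx, if_neg (not_le.mpr hx)]
      · rw [if_neg (not_lt.mpr hx), if_pos hx]
    rw [this]
    apply Continuous.if_le
    · continuity
    · continuity
    · exact continuous_const
    · exact continuous_id
    · intro x hx
      rw [← hx, hsq]; rw [hei]; ring
  have houter : Continuous (fun x : ℝ =>
      if x ≤ 1 then x else if x < (ε ^ 2)⁻¹ then 2 * Real.sqrt x - 1 else ε * x + ε⁻¹ - 1) := by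
    apply Continuous.if_le continuous_id hinner continuous_id continuous_const
    intro x hx
    simp only [id] at hx ⊢
    subst hx
    rw [if_pos hinv, Real.sqrt_one]; norm_num
  exact houter

set_option maxHeartbeats 1000000 in
/-- For `c ≤ 0`, the function
`G(z) = F₀(h + rz² + p(z−c)²) + μ̄(z⁻+c)²` attains its infimum over `ℝ`, and every
minimiser `z*` satisfies `c ≤ z* ≤ (p/(r+p)) c`. -/
theorem second_best_minimiser_location
    (d : ℕ) (hd : 1 ≤ d) (σ lam : Fin d → ℝ)
    (hσ : ∀ j, 0 < σ j) (hlam : ∀ j, 0 < lam j)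
    (ε : ℝ) (hε : ε ∈ Set.Ioo (0 : ℝ) 1)
    (φ : ℝ → ℝ)
    (hφ : φ = fun x =>
      if x ≤ 1 then x else if x < (ε ^ 2)⁻¹ then 2 * Real.sqrt x - 1 else ε * x + ε⁻¹ - 1)
    (F₀ : ℝ → ℝ) (hF₀ : F₀ = fun q => ∑ j, (σ j) ^ 2 / lam j * φ (lam j * q))
    (h p r μbar c : ℝ) (hh : 0 ≤ h) (hp : 0 < p) (hr : 0 < r) (hμbar : 0 < μbar)
    (hc : c ≤ 0)
    (G : ℝ → ℝ)
    (hG : G = fun z =>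
      F₀ (h + r * z ^ 2 + p * (z - c) ^ 2) + μbar * (max (-z) 0 + c) ^ 2) :
    (∃ zstar : ℝ, ∀ z : ℝ, G zstar ≤ G z) ∧
      (∀ zstar : ℝ, (∀ z : ℝ, G zstar ≤ G z) → c ≤ zstar ∧ zstar ≤ (p / (r + p)) * c) := by
  obtain ⟨hε0, hε1⟩ := hε
  have hφmono : StrictMono φ := hφ ▸ phiStrictMono ε hε0 hε1
  have hφcont : Continuous φ := hφ ▸ phiCont ε hε0 hε1
  -- F₀ strict mono
  have hne : (Finset.univ : Finset (Fin d)).Nonempty := by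
    have : Nonempty (Fin d) := ⟨⟨0, hd⟩⟩
    exact Finset.univ_nonempty
  have hF₀mono : ∀ q1 q2 : ℝ, q1 < q2 → F₀ q1 < F₀ q2 := by
    intro q1 q2 hq
    rw [hF₀]
    apply Finset.sum_lt_sum_of_nonempty hne
    intro j _
    have hcoef : 0 < (σ j) ^ 2 / lam j := div_pos (pow_pos (hσ j) 2) (hlam j)
    exact mul_lt_mul_of_pos_left (hφmono (by nlinarith [hlam j])) hcoef
  have hF₀cont : Continuous F₀ := by
    rw [hF₀]
    apply continuous_finset_sum
    intro j _
    exact continuous_const.mul (hφcont.comp (continuous_const.mul continuous_id))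
  have hGcont : Continuous G := by
    rw [hG]
    apply Continuous.add
    · exact hF₀cont.comp
        ((continuous_const.add (continuous_const.mul (continuous_pow 2))).add
          (continuous_const.mul ((continuous_id.sub continuous_const).pow 2)))
    · apply continuous_const.mul
      apply Continuous.pow
      exact (continuous_neg.max continuous_const).add continuous_const
  set z0 : ℝ := (p / (r + p)) * c with hz0def
  have hrp : 0 < r + p := by linarith
  have hz0c : c ≤ z0 := by
    rw [hz0def]
    rw [div_mul_eq_mul_div, le_div_iff₀ hrp]
    nlinarith
  have hz00 : z0 ≤ 0 := by
    rw [hz0def]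
    exact mul_nonpos_of_nonneg_of_nonpos (le_of_lt (div_pos hp hrp)) hc
  -- comparison lemma L1 : z < c → G c < G z
  have L1 : ∀ z : ℝ, z < c → G c < G z := by
    intro z hz
    rw [hG]
    simp only
    have hmax : max (-c) 0 = -c := max_eq_left (by linarith)
    rw [hmax]
    have hQ : h + r * c ^ 2 + p * (c - c) ^ 2 < h + r * z ^ 2 + p * (z - c) ^ 2 := by
      have hzc : z - c < 0 := by linarith
      have h1 : 0 < p * (z - c) ^ 2 := mul_pos hp (by nlinarith)
      have h2 : r * c ^ 2 ≤ r * z ^ 2 := by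
        have hsq : c ^ 2 ≤ z ^ 2 := by
          nlinarith [mul_nonneg (show 0 ≤ c - z by linarith) (show 0 ≤ -(c + z) by linarith)]
        exact mul_le_mul_of_nonneg_left hsq hr.le
      nlinarith
    have hpen : 0 ≤ μbar * (max (-z) 0 + c) ^ 2 := mul_nonneg hμbar.le (sq_nonneg _)
    have := hF₀mono _ _ hQ
    nlinarith
  -- comparison lemma L2 : z0 < z → G z0 < G z
  have L2 : ∀ z : ℝ, z0 < z → G z0 < G z := by
    intro z hz
    rw [hG]
    simp only
    have hz0eq : z0 * (r + p) = p * c := by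
      rw [hz0def]; field_simp
    have hQ : h + r * z0 ^ 2 + p * (z0 - c) ^ 2 < h + r * z ^ 2 + p * (z - c) ^ 2 := by
      nlinarith [mul_pos hrp (mul_pos (sub_pos.mpr hz) (sub_pos.mpr hz))]
    have hmax0 : max (-z0) 0 = -z0 := max_eq_left (by linarith)
    rw [hmax0]
    have hpen : μbar * (-z0 + c) ^ 2 ≤ μbar * (max (-z) 0 + c) ^ 2 := by
      rcases le_or_gt z 0 with hzneg | hzpos
      · have : max (-z) 0 = -z := max_eq_left (by linarith)
        rw [this]
        have : (-z0 + c) ^ 2 ≤ (-z + c) ^ 2 := by nlinarith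
        nlinarith
      · have : max (-z) 0 = 0 := max_eq_right (by linarith)
        rw [this]
        have : (-z0 + c) ^ 2 ≤ (0 + c) ^ 2 := by nlinarith
        nlinarith
    have := hF₀mono _ _ hQ
    linarith
  constructor
  · -- existence
    obtain ⟨zs, hzsmem, hzsmin⟩ :=
      (isCompact_Icc (a := c) (b := 0)).exists_isMinOn (Set.nonempty_Icc.mpr hc)
        hGcont.continuousOn
    refine ⟨zs, fun z => ?_⟩
    rcases le_or_gt z c with h1 | h1
    · rcases eq_or_lt_of_le h1 with rfl | h1'
      · exact hzsmin ⟨le_refl _, hc⟩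
      · exact le_trans (hzsmin ⟨le_refl _, hc⟩) (L1 z h1').le
    · rcases le_or_gt z 0 with h2 | h2
      · exact hzsmin ⟨h1.le, h2⟩
      · exact le_trans (hzsmin ⟨hz0c, hz00⟩) (L2 z (lt_of_le_of_lt hz00 h2)).le
  · -- location
    intro zs hmin
    constructor
    · by_contra hlt
      push_neg at hlt
      exact absurd (hmin c) (not_le.mpr (L1 zs hlt))
    · by_contra hlt
      push_neg at hlt
      exact absurd (hmin z0) (not_le.mpr (L2 zs hlt))
end

section
/- Let h ≥ 0, p, r > 0, μ̄ > 0, ρ := rp/(r+p) and c ≥ 0. Then inf_{z ∈ ℝ} { F₀(h + r z² + p(z − c)²) + μ̄ (z⁻ + c)² } = F₀(h + ρ c²) + μ̄ c², and the infimum is attained at z* := (p/(r+p)) c; in particular h + r (z*)² + p(z* − c)² = h + ρ c². -/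
lemma phi_mono_aux (ε : ℝ) (hε0 : 0 < ε) (hε1 : ε < 1) (a b : ℝ) (ha : 0 ≤ a) (hab : a ≤ b) :
    (if a ≤ 1 then a else if a < (ε ^ 2)⁻¹ then 2 * Real.sqrt a - 1 else ε * a + ε⁻¹ - 1) ≤
    (if b ≤ 1 then b else if b < (ε ^ 2)⁻¹ then 2 * Real.sqrt b - 1 else ε * b + ε⁻¹ - 1) := by
  have hεinv : 1 < ε⁻¹ := (one_lt_inv₀ hε0).mpr hε1
  have hE : (ε ^ 2)⁻¹ = ε⁻¹ ^ 2 := by rw [inv_pow]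
  have hsqrtE : Real.sqrt ((ε ^ 2)⁻¹) = ε⁻¹ := by
    rw [hE, Real.sqrt_sq (le_of_lt (by linarith))]
  split_ifs with ha1 hb1 hb2 ha2 hb3 hb4 hb5 hb6
  · exact hab
  · have hb1' : 1 ≤ b := le_of_not_ge hb1
    have : (1:ℝ) ≤ Real.sqrt b := by
      rw [show (1:ℝ) = Real.sqrt 1 by simp]
      exact Real.sqrt_le_sqrt hb1'
    linarith
  · have hbE : (ε ^ 2)⁻¹ ≤ b := le_of_not_gt hb2
    have : ε⁻¹ ≤ ε * b := by
      have := mul_le_mul_of_nonneg_left hbE (le_of_lt hε0)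
      rw [show ε * (ε ^ 2)⁻¹ = ε⁻¹ by field_simp] at this
      linarith
    linarith
  · exact absurd (hab.trans hb3) ha1
  · have := Real.sqrt_le_sqrt hab
    linarith
  · have hbE : (ε ^ 2)⁻¹ ≤ b := le_of_not_gt hb4
    have h1' : Real.sqrt a ≤ ε⁻¹ := by
      rw [← hsqrtE]; exact Real.sqrt_le_sqrt (le_of_lt ha2)
    have : ε⁻¹ ≤ ε * b := by
      have := mul_le_mul_of_nonneg_left hbE (le_of_lt hε0)
      rw [show ε * (ε ^ 2)⁻¹ = ε⁻¹ by field_simp] at this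
      linarith
    linarith
  · exact absurd (hab.trans hb5) ha1
  · exact absurd (lt_of_le_of_lt ((le_of_not_gt ha2).trans hab) hb6) (lt_irrefl _)
  · nlinarith

/-- For `c ≥ 0`,
`inf_z { F₀(h + rz² + p(z−c)²) + μ̄(z⁻+c)² } = F₀(h + ρc²) + μ̄c²`, the infimum being
attained at `z* = (p/(r+p))c`; in particular `h + r(z*)² + p(z*−c)² = h + ρc²`. -/
theorem second_best_offpeak_infimum
    (d : ℕ) (hd : 1 ≤ d) (σ lam : Fin d → ℝ)
    (hσ : ∀ j, 0 < σ j) (hlam : ∀ j, 0 < lam j)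
    (ε : ℝ) (hε : ε ∈ Set.Ioo (0 : ℝ) 1)
    (φ : ℝ → ℝ)
    (hφ : φ = fun x =>
      if x ≤ 1 then x else if x < (ε ^ 2)⁻¹ then 2 * Real.sqrt x - 1 else ε * x + ε⁻¹ - 1)
    (F₀ : ℝ → ℝ) (hF₀ : F₀ = fun q => ∑ j, (σ j) ^ 2 / lam j * φ (lam j * q))
    (h p r μbar c ρ : ℝ) (hh : 0 ≤ h) (hp : 0 < p) (hr : 0 < r) (hμbar : 0 < μbar)
    (hc : 0 ≤ c) (hρ : ρ = r * p / (r + p))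
    (G : ℝ → ℝ)
    (hG : G = fun z =>
      F₀ (h + r * z ^ 2 + p * (z - c) ^ 2) + μbar * (max (-z) 0 + c) ^ 2)
    (zstar : ℝ) (hzstar : zstar = (p / (r + p)) * c) :
    (∀ z : ℝ, G zstar ≤ G z) ∧
      sInf (Set.range G) = F₀ (h + ρ * c ^ 2) + μbar * c ^ 2 ∧
      h + r * zstar ^ 2 + p * (zstar - c) ^ 2 = h + ρ * c ^ 2 := by
  have hrp : 0 < r + p := by linarith
  have hρ0 : 0 ≤ ρ := by
    rw [hρ]; positivity
  -- the quadratic identity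
  have hq : h + r * zstar ^ 2 + p * (zstar - c) ^ 2 = h + ρ * c ^ 2 := by
    rw [hzstar, hρ]; field_simp; ring
  have hzstar0 : 0 ≤ zstar := by
    rw [hzstar]; positivity
  -- lower bound on the quadratic
  have hquad : ∀ z : ℝ, h + ρ * c ^ 2 ≤ h + r * z ^ 2 + p * (z - c) ^ 2 := by
    intro z
    rw [hρ]
    have key : r * p / (r + p) * c ^ 2 ≤ r * z ^ 2 + p * (z - c) ^ 2 := by
      rw [div_mul_eq_mul_div, div_le_iff₀ hrp]
      nlinarith [sq_nonneg ((r + p) * z - p * c)]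
    linarith
  -- monotonicity of F₀ on nonneg arguments
  have hF₀mono : ∀ a b : ℝ, 0 ≤ a → a ≤ b → F₀ a ≤ F₀ b := by
    intro a b ha hab
    rw [hF₀]
    refine Finset.sum_le_sum fun j _ => ?_
    have hcoef : 0 ≤ (σ j) ^ 2 / lam j := div_nonneg (sq_nonneg _) (hlam j).le
    refine mul_le_mul_of_nonneg_left ?_ hcoef
    rw [hφ]
    exact phi_mono_aux ε hε.1 hε.2 _ _ (mul_nonneg (hlam j).le ha)
      (mul_le_mul_of_nonneg_left hab (hlam j).le)
  have hGzstar : G zstar = F₀ (h + ρ * c ^ 2) + μbar * c ^ 2 := by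
    rw [hG]
    simp only [hq]
    rw [max_eq_right (by linarith), zero_add]
  have hmin : ∀ z : ℝ, G zstar ≤ G z := by
    intro z
    rw [hGzstar, hG]
    have h1 : F₀ (h + ρ * c ^ 2) ≤ F₀ (h + r * z ^ 2 + p * (z - c) ^ 2) :=
      hF₀mono _ _ (add_nonneg hh (mul_nonneg hρ0 (sq_nonneg c))) (hquad z)
    have h2 : μbar * c ^ 2 ≤ μbar * (max (-z) 0 + c) ^ 2 := by
      have hm : 0 ≤ max (-z) 0 := le_max_right _ _
      nlinarith [mul_nonneg hμbar.le (mul_nonneg hm hc), mul_nonneg hμbar.le (sq_nonneg (max (-z) 0))]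
    simpa using add_le_add h1 h2
  refine ⟨hmin, ?_, hq⟩
  rw [← hGzstar]
  exact IsLeast.csInf_eq ⟨⟨zstar, rfl⟩, by rintro y ⟨z, rfl⟩; exact hmin z⟩
end

section
/- Let s > 0, h ∈ ℝ, p, r > 0, μ̄ > 0 and c ∈ ℝ. Define Λ := (p s + μ̄·𝟙_{c<0}) / ((p+r) s + μ̄·𝟙_{c<0}), where 𝟙_{c<0} equals 1 if c < 0 and 0 otherwise. Then the function z ↦ (h + r z² + p(z − c)²) s + μ̄ (z⁻ + c)² attains its infimum over ℝ at the unique point z* = Λ c. -/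
/-- Without responsiveness incentives, the function
`z ↦ (h + rz² + p(z−c)²)s + μ̄(z⁻+c)²` attains its infimum over `ℝ` at the unique point
`z* = Λc` where `Λ = (ps + μ̄·𝟙_{c<0})/((p+r)s + μ̄·𝟙_{c<0})`. -/
theorem second_best_no_responsiveness_minimiser
    (s h p r μbar c : ℝ) (hs : 0 < s) (hp : 0 < p) (hr : 0 < r) (hμbar : 0 < μbar)
    (Λ : ℝ)
    (hΛ : Λ = (p * s + μbar * (if c < 0 then 1 else 0)) /
        ((p + r) * s + μbar * (if c < 0 then 1 else 0)))
    (f : ℝ → ℝ)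
    (hf : f = fun z =>
      (h + r * z ^ 2 + p * (z - c) ^ 2) * s + μbar * (max (-z) 0 + c) ^ 2)
    (zstar : ℝ) (hzstar : zstar = Λ * c) :
    (∀ z : ℝ, f zstar ≤ f z) ∧ (∀ z : ℝ, z ≠ zstar → f zstar < f z) := by
  have strict : ∀ z : ℝ, z ≠ zstar → f zstar < f z := by
    intro z hz
    subst hΛ hf
    by_cases hc : c < 0
    · -- indicator = 1
      simp only [if_pos hc] at hzstar
      have hD : (0:ℝ) < (p + r) * s + μbar * 1 := by nlinarith
      have hwD : ((p + r) * s + μbar) * zstar = (p * s + μbar) * c := by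
        rw [hzstar]; field_simp; try ring
      have hN : (0:ℝ) < p * s + μbar := by nlinarith
      have hw0 : zstar < 0 := by nlinarith [mul_pos hN (neg_pos.mpr hc)]
      have hmw : max (-zstar) 0 = -zstar := max_eq_left (by linarith)
      simp only [hmw]
      have hne : z - zstar ≠ 0 := sub_ne_zero.mpr hz
      have hsq : 0 < (z - zstar) ^ 2 := by positivity
      by_cases hzle : z ≤ 0
      · have hmz : max (-z) 0 = -z := max_eq_left (by linarith)
        simp only [hmz]
        have hid : (h + r * z ^ 2 + p * (z - c) ^ 2) * s + μbar * (-z + c) ^ 2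
            = (h + r * zstar ^ 2 + p * (zstar - c) ^ 2) * s + μbar * (-zstar + c) ^ 2
              + ((p + r) * s + μbar) * (z - zstar) ^ 2 := by
          linear_combination (2 * z - 2 * zstar) * hwD
        rw [hid]
        nlinarith [mul_pos hD hsq]
      · push_neg at hzle
        have hmz : max (-z) 0 = 0 := max_eq_right (by linarith)
        simp only [hmz]
        have hsqw : 0 < zstar ^ 2 := by nlinarith
        have hid : (h + r * z ^ 2 + p * (z - c) ^ 2) * s + μbar * (0 + c) ^ 2
            = (h + r * zstar ^ 2 + p * (zstar - c) ^ 2) * s + μbar * (-zstar + c) ^ 2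
              + ((p + r) * s + μbar) * zstar ^ 2 + (p + r) * s * z ^ 2
              - 2 * p * s * c * z := by
          linear_combination (-2 * zstar) * hwD
        rw [hid]
        nlinarith [mul_pos hD hsqw, mul_pos (mul_pos hp hs)
          (mul_pos hzle (neg_pos.mpr hc)), mul_pos (mul_pos (by linarith : (0:ℝ) < p + r) hs)
          (mul_pos hzle hzle)]
    · -- indicator = 0
      push_neg at hc
      simp only [if_neg (not_lt.mpr hc)] at hzstar
      have hD : (0:ℝ) < (p + r) * s + μbar * 0 := by nlinarith
      have hwD : ((p + r) * s) * zstar = p * s * c := by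
        rw [hzstar]; field_simp; try ring
      have hw0 : 0 ≤ zstar := by
        nlinarith [mul_nonneg (mul_pos hp hs).le hc]
      have hmw : max (-zstar) 0 = 0 := max_eq_right (by linarith)
      simp only [hmw]
      have hne : z - zstar ≠ 0 := sub_ne_zero.mpr hz
      have hsq : 0 < (z - zstar) ^ 2 := by positivity
      by_cases hzle : 0 ≤ z
      · have hmz : max (-z) 0 = 0 := max_eq_right (by linarith)
        simp only [hmz]
        have hid : (h + r * z ^ 2 + p * (z - c) ^ 2) * s + μbar * (0 + c) ^ 2
            = (h + r * zstar ^ 2 + p * (zstar - c) ^ 2) * s + μbar * (0 + c) ^ 2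
              + ((p + r) * s) * (z - zstar) ^ 2 := by
          linear_combination (2 * z - 2 * zstar) * hwD
        rw [hid]
        nlinarith [mul_pos (mul_pos (by linarith : (0:ℝ) < p + r) hs) hsq]
      · push_neg at hzle
        have hmz : max (-z) 0 = -z := max_eq_left (by linarith)
        simp only [hmz]
        have hid : (h + r * z ^ 2 + p * (z - c) ^ 2) * s + μbar * (-z + c) ^ 2
            = (h + r * zstar ^ 2 + p * (zstar - c) ^ 2) * s + μbar * (0 + c) ^ 2
              + ((p + r) * s) * (z - zstar) ^ 2 + μbar * (z ^ 2 - 2 * c * z) := by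
          linear_combination (2 * z - 2 * zstar) * hwD
        rw [hid]
        nlinarith [mul_pos (mul_pos (by linarith : (0:ℝ) < p + r) hs) hsq,
          mul_pos hμbar (mul_pos (neg_pos.mpr hzle) (neg_pos.mpr hzle)),
          mul_nonneg (mul_nonneg hμbar.le hc) (neg_pos.mpr hzle).le]
  refine ⟨fun z => ?_, strict⟩
  by_cases h : z = zstar
  · rw [h]
  · exact (strict z h).le
end

section
/- Let κ, θ ∈ ℝ, δ := κ − θ, s > 0, μ̄ > 0 and p, r > 0. Define Λ := (p s + μ̄·𝟙_{δ<0}) / ((p+r) s + μ̄·𝟙_{δ<0}), π_FB := (r κ + p θ)/(r+p) and π⁰_SB := (1 − Λ) κ + Λ θ. Then Λ ≥ p/(r+p) and π_FB − π⁰_SB = (Λ − p/(r+p)) δ; in particular π_FB ≥ π⁰_SB when δ ≥ 0 and π_FB ≤ π⁰_SB when δ ≤ 0. -/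
/-- Comparison of the first-best energy price with the second-best energy price
without responsiveness incentives: `Λ ≥ p/(r+p)` and `π_FB − π⁰_SB = (Λ − p/(r+p))δ`; in
particular `π_FB ≥ π⁰_SB` when `δ ≥ 0` and `π_FB ≤ π⁰_SB` when `δ ≤ 0`. -/
theorem energy_price_comparison
    (κ θ δ s μbar p r : ℝ) (hδ : δ = κ - θ) (hs : 0 < s) (hμbar : 0 < μbar)
    (hp : 0 < p) (hr : 0 < r)
    (Λ : ℝ)
    (hΛ : Λ = (p * s + μbar * (if δ < 0 then 1 else 0)) /
        ((p + r) * s + μbar * (if δ < 0 then 1 else 0)))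
    (πFB : ℝ) (hπFB : πFB = (r * κ + p * θ) / (r + p))
    (πSB : ℝ) (hπSB : πSB = (1 - Λ) * κ + Λ * θ) :
    p / (r + p) ≤ Λ ∧
      πFB - πSB = (Λ - p / (r + p)) * δ ∧
      (0 ≤ δ → πSB ≤ πFB) ∧
      (δ ≤ 0 → πFB ≤ πSB) := by
  set m : ℝ := μbar * (if δ < 0 then 1 else 0) with hm
  have hm0 : 0 ≤ m := by
    rw [hm]; positivity
  have hden : 0 < (p + r) * s + m := by positivity
  have hrp : 0 < r + p := by linarith
  have h1 : p / (r + p) ≤ Λ := by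
    rw [hΛ, div_le_div_iff₀ hrp hden]
    nlinarith
  have h2 : πFB - πSB = (Λ - p / (r + p)) * δ := by
    rw [hπFB, hπSB, hΛ, hδ]
    field_simp
    ring
  refine ⟨h1, h2, ?_, ?_⟩
  · intro hd
    nlinarith [mul_nonneg (sub_nonneg.mpr h1) hd]
  · intro hd
    nlinarith [mul_nonpos_of_nonneg_of_nonpos (sub_nonneg.mpr h1) hd]
end

section
/- Let s := ∑_{j=1}^d σ_j², λ̄ := max_{1 ≤ j ≤ d} λ_j, μ̄ > 0, p, r > 0, h ≥ 0 and c ≤ 0, and set Λ := (p s + μ̄) / ((p+r) s + μ̄). If h + r c² ≤ 1/λ̄, then inf_{z ∈ ℝ} { F₀(h + r z² + p(z − c)²) + μ̄ (z⁻ + c)² } = (h + r Λ c²) s, and the infimum is attained at z = Λ c. -/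
set_option maxHeartbeats 1000000


/-- In the small-cost regime `h + rc² ≤ 1/λ̄` (with `c ≤ 0`),
`inf_z { F₀(h + rz² + p(z−c)²) + μ̄(z⁻+c)² } = (h + rΛc²)s`, attained at `z = Λc`,
where `Λ = (ps+μ̄)/((p+r)s+μ̄)`. -/
theorem second_best_small_cost_regime
    (d : ℕ) (hd : 1 ≤ d) (σ lam : Fin d → ℝ)
    (hσ : ∀ j, 0 < σ j) (hlam : ∀ j, 0 < lam j)
    (ε : ℝ) (hε : ε ∈ Set.Ioo (0 : ℝ) 1)
    (φ : ℝ → ℝ)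
    (hφ : φ = fun x =>
      if x ≤ 1 then x else if x < (ε ^ 2)⁻¹ then 2 * Real.sqrt x - 1 else ε * x + ε⁻¹ - 1)
    (F₀ : ℝ → ℝ) (hF₀ : F₀ = fun q => ∑ j, (σ j) ^ 2 / lam j * φ (lam j * q))
    (s : ℝ) (hs : s = ∑ j, (σ j) ^ 2)
    (lamb : ℝ) (hlamb : IsGreatest (Set.range lam) lamb)
    (μbar p r h c : ℝ) (hμbar : 0 < μbar) (hp : 0 < p) (hr : 0 < r) (hh : 0 ≤ h)
    (hc : c ≤ 0)
    (Λ : ℝ) (hΛ : Λ = (p * s + μbar) / ((p + r) * s + μbar))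
    (hsmall : h + r * c ^ 2 ≤ 1 / lamb)
    (G : ℝ → ℝ)
    (hG : G = fun z =>
      F₀ (h + r * z ^ 2 + p * (z - c) ^ 2) + μbar * (max (-z) 0 + c) ^ 2) :
    (∀ z : ℝ, G (Λ * c) ≤ G z) ∧
      sInf (Set.range G) = (h + r * Λ * c ^ 2) * s := by

  obtain ⟨hε0, hε1⟩ := hε
  have hεi : 1 ≤ ε⁻¹ := by nlinarith [mul_inv_cancel₀ hε0.ne', inv_pos.2 hε0]
  obtain ⟨j₀, hj₀⟩ := hlamb.1
  have hlamb0 : 0 < lamb := hj₀ ▸ hlam j₀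
  have hlam_le : ∀ j, lam j ≤ lamb := fun j => hlamb.2 ⟨j, rfl⟩
  have : Nonempty (Fin d) := ⟨⟨0, hd⟩⟩
  have hs0 : 0 < s := by
    rw [hs]; exact Finset.sum_pos (fun j _ => pow_pos (hσ j) 2) Finset.univ_nonempty
  have hD : 0 < (p + r) * s + μbar := by nlinarith
  have hΛD : Λ * ((p + r) * s + μbar) = p * s + μbar := by
    rw [hΛ, div_mul_cancel₀ _ hD.ne']
  have hΛ0 : 0 ≤ Λ := by
    rw [hΛ]; positivity
  have hΛ1 : Λ ≤ 1 := by
    rw [hΛ, div_le_one hD]; nlinarith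
  have hΛp : p ≤ (p + r) * Λ := by
    have h1 : 0 ≤ μbar * (1 - Λ) := mul_nonneg hμbar.le (by linarith)
    have h2 : (p + r) * Λ * s = p * s + μbar * (1 - Λ) := by ring_nf; nlinarith [hΛD]
    nlinarith [h2, h1, hs0]
  -- φ lemmas
  have hφ_lin : ∀ x : ℝ, x ≤ 1 → φ x = x := by
    intro x hx; rw [hφ]; simp [hx]
  have hφ_ge : ∀ x t : ℝ, t ≤ 1 → t ≤ x → t ≤ φ x := by
    intro x t ht1 htx
    rw [hφ]; dsimp only
    split_ifs with h1 h2
    · exact htx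
    · push_neg at h1
      have hx0 : (1:ℝ) ≤ x := h1.le
      have : (1:ℝ) ≤ Real.sqrt x := by
        rw [show (1:ℝ) = Real.sqrt 1 from Real.sqrt_one.symm]
        exact Real.sqrt_le_sqrt hx0
      linarith
    · push_neg at h1 h2
      have hx : (ε ^ 2)⁻¹ ≤ x := h2
      have he : ε * (ε ^ 2)⁻¹ = ε⁻¹ := by
        field_simp
      have : ε⁻¹ ≤ ε * x := by
        rw [← he]; exact mul_le_mul_of_nonneg_left hx hε0.le
      linarith
  -- linearity of F₀ below 1/λ̄
  have hF₀lin : ∀ q : ℝ, q ≤ 1 / lamb → F₀ q = s * q := by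
    intro q hqle
    rw [hF₀]; dsimp only
    rw [hs, Finset.sum_mul]
    apply Finset.sum_congr rfl
    intro j _
    have hlj := hlam j
    have h1 : lam j * q ≤ 1 := by
      calc lam j * q ≤ lam j * (1 / lamb) := mul_le_mul_of_nonneg_left hqle hlj.le
        _ ≤ lamb * (1 / lamb) := mul_le_mul_of_nonneg_right (hlam_le j) (by positivity)
        _ = 1 := by field_simp
    rw [hφ_lin _ h1]
    field_simp
  -- value at the minimizer
  have hzc : Λ * c ≤ 0 := mul_nonpos_of_nonneg_of_nonpos hΛ0 hc
  have hqstar_le : h + r * (Λ * c) ^ 2 + p * (Λ * c - c) ^ 2 ≤ h + r * c ^ 2 := by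
    nlinarith [mul_nonneg (mul_nonneg (sub_nonneg.2 hΛ1) (by linarith : (0:ℝ) ≤ (p + r) * Λ + r - p)) (sq_nonneg c)]
  have hval : G (Λ * c) = (h + r * Λ * c ^ 2) * s := by
    rw [hG]; dsimp only
    rw [hF₀lin _ (le_trans hqstar_le hsmall)]
    rw [max_eq_left (neg_nonneg.2 hzc)]
    linear_combination (c ^ 2 * (Λ - 1)) * hΛD
  -- uniform lower bound
  have key : ∀ z : ℝ, (h + r * Λ * c ^ 2) * s ≤ G z := by
    intro z
    rw [hG]; dsimp only
    set q := h + r * z ^ 2 + p * (z - c) ^ 2 with hqdef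
    rcases le_or_gt q (1 / lamb) with hle | hgt
    · rw [hF₀lin _ hle]
      have iden : s * r * z ^ 2 + (s * p + μbar) * (z - c) ^ 2
          = ((p + r) * s + μbar) * (z - Λ * c) ^ 2 + s * r * Λ * c ^ 2 := by
        linear_combination (2 * c * z - c ^ 2 * (1 + Λ)) * hΛD
      rcases le_or_gt z 0 with hz | hz
      · rw [max_eq_left (neg_nonneg.2 hz)]
        nlinarith [iden, mul_nonneg hD.le (sq_nonneg (z - Λ * c))]
      · rw [max_eq_right (neg_nonpos.2 hz.le)]
        have h1 : s * r * Λ ≤ s * p + μbar := by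
          nlinarith [mul_nonneg hΛ0 (add_nonneg (mul_nonneg hs0.le hp.le) hμbar.le)]
        have h2 : (0:ℝ) ≤ (z - c) ^ 2 - c ^ 2 := by nlinarith
        nlinarith [mul_nonneg (mul_nonneg hs0.le hp.le) h2,
          mul_nonneg hs0.le (mul_nonneg hr.le (sq_nonneg z)),
          mul_le_mul_of_nonneg_right h1 (sq_nonneg c)]
    · have hqbar : h + r * c ^ 2 ≤ q := le_trans hsmall hgt.le
      have hFge : s * (h + r * c ^ 2) ≤ F₀ q := by
        rw [hF₀]; dsimp only
        rw [hs, Finset.sum_mul]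
        apply Finset.sum_le_sum
        intro j _
        have hlj := hlam j
        have ht1 : lam j * (h + r * c ^ 2) ≤ 1 := by
          calc lam j * (h + r * c ^ 2) ≤ lam j * (1 / lamb) :=
                mul_le_mul_of_nonneg_left hsmall hlj.le
            _ ≤ lamb * (1 / lamb) := mul_le_mul_of_nonneg_right (hlam_le j) (by positivity)
            _ = 1 := by field_simp
        have htx : lam j * (h + r * c ^ 2) ≤ lam j * q :=
          mul_le_mul_of_nonneg_left hqbar hlj.le
        have h1 := hφ_ge (lam j * q) (lam j * (h + r * c ^ 2)) ht1 htx
        calc σ j ^ 2 * (h + r * c ^ 2) = σ j ^ 2 / lam j * (lam j * (h + r * c ^ 2)) := by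
              field_simp
          _ ≤ σ j ^ 2 / lam j * φ (lam j * q) :=
              mul_le_mul_of_nonneg_left h1 (by positivity)
      have hμ : 0 ≤ μbar * (max (-z) 0 + c) ^ 2 := by positivity
      nlinarith [mul_nonneg hs0.le (mul_nonneg hr.le (mul_nonneg (sub_nonneg.2 hΛ1) (sq_nonneg c)))]
  refine ⟨fun z => hval ▸ key z, ?_⟩
  apply le_antisymm
  · exact csInf_le ⟨(h + r * Λ * c ^ 2) * s, by rintro _ ⟨z, rfl⟩; exact key z⟩ ⟨Λ * c, hval⟩
  · exact le_csInf ⟨_, ⟨Λ * c, hval⟩⟩ (by rintro _ ⟨z, rfl⟩; exact key z)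
end

section
/- Let T > 0, δ ≤ 0, h ≥ 0, p, r > 0, μ̄ > 0, ρ := rp/(r+p), s := ∑_{j=1}^d σ_j² and λ̄ := max_{1 ≤ j ≤ d} λ_j, and assume h + r δ² T² ≤ 1/λ̄. For t ∈ [0,T] define m_FB(t) := (1/2) μ̄ (δ⁻)² (T−t)² + H_v(−h − ρ δ² (T−t)²) and m_SB(t) := (1/2) μ̄ δ² (T−t)² − (1/2) inf_{z ∈ ℝ} { F₀(h + r z² + p(z − δ(T−t))²) + μ̄ (z⁻ + δ(T−t))² }. Then the informational rent satisfies ∫_0^T (m_FB(t) − m_SB(t)) dt = ( δ² T³ r² / (6(p+r)) ) · ( 1/s + (p+r)/μ̄ )^{−1}. -/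
/-- Minimum of the quadratic `a w² + b (w-c)²`. -/
lemma quad_min_aux (a b w c : ℝ) (ha : 0 < a) (hb : 0 < b) :
    a * b / (a + b) * c ^ 2 ≤ a * w ^ 2 + b * (w - c) ^ 2 := by
  rw [div_mul_eq_mul_div, div_le_iff₀ (by positivity)]
  nlinarith [sq_nonneg (a * w + b * (w - c))]

/-- Value of the quadratic at its minimizer. -/
lemma quad_eq_aux (a b c : ℝ) (ha : 0 < a) (hb : 0 < b) :
    a * (b / (a + b) * c) ^ 2 + b * (b / (a + b) * c - c) ^ 2 = a * b / (a + b) * c ^ 2 := by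
  have h : a + b ≠ 0 := by positivity
  field_simp
  ring

/-- The optimal `z*` yields a cost argument no larger than `h + r c²`. -/
lemma qstar_le_aux (r p s μ c : ℝ) (hr : 0 < r) (hp : 0 < p) (hs : 0 < s) (hμ : 0 < μ) :
    r * ((s * p + μ) / (s * r + (s * p + μ)) * c) ^ 2 +
      p * ((s * p + μ) / (s * r + (s * p + μ)) * c - c) ^ 2 ≤ r * c ^ 2 := by
  have hA : (0:ℝ) < s * r + (s * p + μ) := by positivity
  have h1 : (s * p + μ) / (s * r + (s * p + μ)) * c - c
      = -(s * r / (s * r + (s * p + μ)) * c) := by field_simp <;> ring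
  have key : r * ((s * p + μ) * c) ^ 2 + p * (s * r * c) ^ 2
      ≤ r * ((s * r + (s * p + μ)) * c) ^ 2 := by
    nlinarith [sq_nonneg c, mul_pos hs hr, mul_pos hs hp, mul_pos (mul_pos hs hr) hr,
      mul_nonneg (sq_nonneg c) (mul_nonneg (mul_nonneg hs.le hr.le) hμ.le)]
  calc r * ((s * p + μ) / (s * r + (s * p + μ)) * c) ^ 2 +
        p * ((s * p + μ) / (s * r + (s * p + μ)) * c - c) ^ 2
      = (r * ((s * p + μ) * c) ^ 2 + p * (s * r * c) ^ 2) / (s * r + (s * p + μ)) ^ 2 := by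
        rw [h1]; field_simp
    _ ≤ (r * ((s * r + (s * p + μ)) * c) ^ 2) / (s * r + (s * p + μ)) ^ 2 := by
        gcongr
    _ = r * c ^ 2 := by field_simp

set_option maxHeartbeats 4000000 in
/-- During peak-load periods (`δ ≤ 0`), in the small-cost regime
`h + rδ²T² ≤ 1/λ̄`, the informational rent equals
`∫_0^T (m_FB − m_SB) = (δ²T³r²/(6(p+r))) (1/s + (p+r)/μ̄)⁻¹`. -/
theorem information_rent_peak
    (d : ℕ) (hd : 1 ≤ d) (σ lam : Fin d → ℝ)
    (hσ : ∀ j, 0 < σ j) (hlam : ∀ j, 0 < lam j)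
    (ε : ℝ) (hε : ε ∈ Set.Ioo (0 : ℝ) 1)
    (B : Set (Fin d → ℝ)) (hB : B = {b | ∀ j, b j ∈ Set.Icc ε 1})
    (c₂ : (Fin d → ℝ) → ℝ)
    (hc₂ : c₂ = fun b => ∑ j, (σ j) ^ 2 / lam j * (1 / b j - 1))
    (σsq : (Fin d → ℝ) → ℝ) (hσsq : σsq = fun b => ∑ j, (σ j) ^ 2 * b j)
    (Hv : ℝ → ℝ)
    (hHv : Hv = fun γ => -(1 / 2) * sInf ((fun b => c₂ b - γ * σsq b) '' B))
    (φ : ℝ → ℝ)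
    (hφ : φ = fun x =>
      if x ≤ 1 then x else if x < (ε ^ 2)⁻¹ then 2 * Real.sqrt x - 1 else ε * x + ε⁻¹ - 1)
    (F₀ : ℝ → ℝ) (hF₀ : F₀ = fun q => ∑ j, (σ j) ^ 2 / lam j * φ (lam j * q))
    (s : ℝ) (hs : s = ∑ j, (σ j) ^ 2)
    (lamb : ℝ) (hlamb : IsGreatest (Set.range lam) lamb)
    (T δ h p r μbar ρ : ℝ) (hT : 0 < T) (hδ : δ ≤ 0) (hh : 0 ≤ h)
    (hp : 0 < p) (hr : 0 < r) (hμbar : 0 < μbar) (hρ : ρ = r * p / (r + p))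
    (hsmall : h + r * δ ^ 2 * T ^ 2 ≤ 1 / lamb)
    (mFB : ℝ → ℝ)
    (hmFB : mFB = fun t =>
      (1 / 2) * μbar * (max (-δ) 0) ^ 2 * (T - t) ^ 2 + Hv (-h - ρ * δ ^ 2 * (T - t) ^ 2))
    (mSB : ℝ → ℝ)
    (hmSB : mSB = fun t =>
      (1 / 2) * μbar * δ ^ 2 * (T - t) ^ 2 -
        (1 / 2) * sInf (Set.range fun z : ℝ =>
          F₀ (h + r * z ^ 2 + p * (z - δ * (T - t)) ^ 2) +
            μbar * (max (-z) 0 + δ * (T - t)) ^ 2)) :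
    (∫ t in (0 : ℝ)..T, (mFB t - mSB t)) =
      δ ^ 2 * T ^ 3 * r ^ 2 / (6 * (p + r)) * (1 / s + (p + r) / μbar)⁻¹ := by
  have hd' : Nonempty (Fin d) := Fin.pos_iff_nonempty.mp hd
  have hspos : 0 < s := by
    rw [hs]; exact Finset.sum_pos (fun j _ => pow_pos (hσ j) 2) Finset.univ_nonempty
  obtain ⟨j₀, hj₀⟩ := hlamb.1
  have hlambpos : 0 < lamb := hj₀ ▸ hlam j₀
  have hlamle : ∀ j, lam j ≤ lamb := fun j => hlamb.2 ⟨j, rfl⟩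
  have hεpos : 0 < ε := hε.1
  have hε1 : ε < 1 := hε.2
  have hsmall' : (h + r * δ ^ 2 * T ^ 2) * lamb ≤ 1 := by
    rw [← le_div_iff₀ hlambpos]; exact hsmall
  -- φ is the identity below 1
  have hphi1 : ∀ x : ℝ, x ≤ 1 → φ x = x := by
    intro x hx; simp [hφ, hx]
  -- φ dominates min x 1
  have hphimin : ∀ x : ℝ, 0 ≤ x → min x 1 ≤ φ x := by
    intro x hx
    rw [hφ]
    dsimp only
    split_ifs with h1 h2
    · exact min_le_left x 1
    · have hx1 : 1 < x := lt_of_not_ge h1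
      have hsx : 1 < Real.sqrt x := by
        rw [show (1:ℝ) = Real.sqrt 1 by simp]
        exact Real.sqrt_lt_sqrt (by norm_num) hx1
      calc min x 1 ≤ 1 := min_le_right x 1
        _ ≤ 2 * Real.sqrt x - 1 := by linarith
    · have hx2 : (ε ^ 2)⁻¹ ≤ x := le_of_not_gt h2
      have hεinv : 1 ≤ ε⁻¹ := (one_le_inv₀ hεpos).mpr hε1.le
      have h2ε : ε * (ε ^ 2)⁻¹ = ε⁻¹ := by
        rw [sq, mul_inv, ← mul_assoc, mul_inv_cancel₀ hεpos.ne', one_mul]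
      have h3 : ε⁻¹ ≤ ε * x := by
        calc ε⁻¹ = ε * (ε ^ 2)⁻¹ := h2ε.symm
          _ ≤ ε * x := by exact mul_le_mul_of_nonneg_left hx2 hεpos.le
      calc min x 1 ≤ 1 := min_le_right x 1
        _ ≤ ε * x + ε⁻¹ - 1 := by linarith
  -- F₀ is linear in the small regime
  have hF0lin : ∀ q : ℝ, 0 ≤ q → q ≤ 1 / lamb → F₀ q = s * q := by
    intro q hq0 hq
    rw [hF₀, hs, Finset.sum_mul]
    refine Finset.sum_congr rfl fun j _ => ?_
    have h1 : lam j * q ≤ 1 := by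
      calc lam j * q ≤ lamb * q := mul_le_mul_of_nonneg_right (hlamle j) hq0
        _ ≤ lamb * (1 / lamb) := mul_le_mul_of_nonneg_left hq hlambpos.le
        _ = 1 := by field_simp
    rw [hphi1 _ h1]
    field_simp [(hlam j).ne']
  -- F₀ lower bound past the small regime
  have hF0low : ∀ q : ℝ, 1 / lamb ≤ q → s * (1 / lamb) ≤ F₀ q := by
    intro q hq
    have hq0 : 0 ≤ q := le_trans (by positivity) hq
    rw [hF₀, hs, Finset.sum_mul]
    refine Finset.sum_le_sum fun j _ => ?_
    have hmin : min (lam j * q) 1 ≤ φ (lam j * q) := hphimin _ (mul_nonneg (hlam j).le hq0)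
    have h1 : lam j * (1 / lamb) ≤ min (lam j * q) 1 := by
      refine le_min (mul_le_mul_of_nonneg_left hq (hlam j).le) ?_
      rw [mul_one_div, div_le_one hlambpos]
      exact hlamle j
    calc σ j ^ 2 * (1 / lamb) = σ j ^ 2 / lam j * (lam j * (1 / lamb)) := by
          field_simp [(hlam j).ne'] <;> ring
      _ ≤ σ j ^ 2 / lam j * φ (lam j * q) :=
          mul_le_mul_of_nonneg_left (h1.trans hmin) (div_nonneg (sq_nonneg _) (hlam j).le)
  -- Hv is linear for small nonpositive arguments
  have hHvval : ∀ γ : ℝ, γ ≤ 0 → -γ * lamb ≤ 1 → Hv γ = γ * s / 2 := by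
    intro γ hγ hgl
    have hleast : IsLeast ((fun b => c₂ b - γ * σsq b) '' B) (-γ * s) := by
      constructor
      · refine ⟨fun _ => 1, ?_, ?_⟩
        · rw [hB]; intro j; exact ⟨hε1.le, le_refl 1⟩
        · rw [hc₂, hσsq, hs]; simp
      · rintro y ⟨b, hbB, rfl⟩
        rw [hB] at hbB
        rw [hc₂, hσsq, hs]
        dsimp only
        rw [Finset.mul_sum, Finset.mul_sum, ← Finset.sum_sub_distrib]
        refine Finset.sum_le_sum fun j _ => ?_
        obtain ⟨hbl, hbu⟩ := hbB j
        have hb0 : 0 < b j := lt_of_lt_of_le hεpos hbl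
        have hglj : -γ * lam j ≤ 1 := by
          calc -γ * lam j ≤ -γ * lamb := mul_le_mul_of_nonneg_left (hlamle j) (by linarith)
            _ ≤ 1 := hgl
        have heq : σ j ^ 2 / lam j * (1 / b j - 1) = σ j ^ 2 * (1 - b j) / (lam j * b j) := by
          field_simp [(hlam j).ne', hb0.ne'] <;> ring
        have hzz : -γ * lam j * b j ≤ 1 := by
          nlinarith [mul_nonneg (neg_nonneg.2 hγ) (hlam j).le]
        have hkey : -γ * (σ j ^ 2 * (1 - b j)) ≤ σ j ^ 2 * (1 - b j) / (lam j * b j) := by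
          rw [le_div_iff₀ (mul_pos (hlam j) hb0)]
          nlinarith [mul_nonneg (mul_nonneg (sq_nonneg (σ j)) (sub_nonneg.2 hbu))
            (sub_nonneg.2 hzz)]
        rw [heq]
        linarith [hkey]
    rw [hHv]
    dsimp only
    rw [hleast.csInf_eq]
    ring
  -- abbreviations
  set a : ℝ := s * r with ha_def
  set b : ℝ := s * p + μbar with hb_def
  have ha0 : 0 < a := by positivity
  have hb0 : 0 < b := by positivity
  have hA0 : 0 < a + b := by positivity
  -- the integrand equals an explicit quadratic on [0, T]
  have key : Set.EqOn (fun t => mFB t - mSB t)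
      (fun t => a * b / (a + b) / 2 * (δ * (T - t)) ^ 2 - ρ * s / 2 * (δ * (T - t)) ^ 2 )
      (Set.uIcc 0 T) := by
    intro t ht
    rw [Set.uIcc_of_le hT.le] at ht
    obtain ⟨ht0, htT⟩ := ht
    have hτ0 : 0 ≤ T - t := by linarith
    have hτT : T - t ≤ T := by linarith
    set c : ℝ := δ * (T - t) with hc_def
    have hc0 : c ≤ 0 := mul_nonpos_of_nonpos_of_nonneg hδ hτ0
    have hcsq : c ^ 2 ≤ δ ^ 2 * T ^ 2 := by
      rw [hc_def, mul_pow]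
      exact mul_le_mul_of_nonneg_left (pow_le_pow_left₀ hτ0 hτT 2) (sq_nonneg δ)
    have hρr : 0 ≤ ρ ∧ ρ ≤ r := by
      constructor
      · rw [hρ]; positivity
      · rw [hρ, div_le_iff₀ (by positivity)]; nlinarith
    -- the first-best term
    have hγ1 : -h - ρ * δ ^ 2 * (T - t) ^ 2 ≤ 0 := by
      have := mul_nonneg (mul_nonneg hρr.1 (sq_nonneg δ)) (sq_nonneg (T - t))
      linarith
    have hγ2 : -(-h - ρ * δ ^ 2 * (T - t) ^ 2) * lamb ≤ 1 := by
      have h1 : h + ρ * δ ^ 2 * (T - t) ^ 2 ≤ h + r * δ ^ 2 * T ^ 2 := by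
        have h2 : ρ * (δ ^ 2 * (T - t) ^ 2) ≤ r * (δ ^ 2 * T ^ 2) := by
          apply mul_le_mul hρr.2 _ (by positivity) hr.le
          exact mul_le_mul_of_nonneg_left (pow_le_pow_left₀ hτ0 hτT 2) (sq_nonneg δ)
        linarith
      calc -(-h - ρ * δ ^ 2 * (T - t) ^ 2) * lamb = (h + ρ * δ ^ 2 * (T - t) ^ 2) * lamb := by ring
        _ ≤ (h + r * δ ^ 2 * T ^ 2) * lamb := mul_le_mul_of_nonneg_right h1 hlambpos.le
        _ ≤ 1 := hsmall'
    -- second-best: compute the infimum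
    have hSB : sInf (Set.range fun z : ℝ =>
        F₀ (h + r * z ^ 2 + p * (z - δ * (T - t)) ^ 2) +
          μbar * (max (-z) 0 + δ * (T - t)) ^ 2) = s * h + a * b / (a + b) * c ^ 2 := by
      have hleast : IsLeast (Set.range fun z : ℝ =>
          F₀ (h + r * z ^ 2 + p * (z - δ * (T - t)) ^ 2) +
            μbar * (max (-z) 0 + δ * (T - t)) ^ 2) (s * h + a * b / (a + b) * c ^ 2) := by
        constructor
        · refine ⟨b / (a + b) * c, ?_⟩
          show F₀ (h + r * (b / (a + b) * c) ^ 2 + p * (b / (a + b) * c - δ * (T - t)) ^ 2) +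
              μbar * (max (-(b / (a + b) * c)) 0 + δ * (T - t)) ^ 2
              = s * h + a * b / (a + b) * c ^ 2
          rw [← hc_def]
          have hz0 : b / (a + b) * c ≤ 0 :=
            mul_nonpos_of_nonneg_of_nonpos (by positivity) hc0
          have hqle : r * (b / (a + b) * c) ^ 2 + p * (b / (a + b) * c - c) ^ 2 ≤ r * c ^ 2 := by
            have := qstar_le_aux r p s μbar c hr hp hspos hμbar
            rw [ha_def, hb_def]
            convert this using 3
          have hrc : r * c ^ 2 ≤ r * (δ ^ 2 * T ^ 2) := mul_le_mul_of_nonneg_left hcsq hr.le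
          have hq1 : h + r * (b / (a + b) * c) ^ 2 + p * (b / (a + b) * c - c) ^ 2
              ≤ 1 / lamb := by linarith [hqle, hrc, hsmall]
          have hq0 : 0 ≤ h + r * (b / (a + b) * c) ^ 2 + p * (b / (a + b) * c - c) ^ 2 := by
            positivity
          rw [hF0lin _ hq0 hq1]
          have hmax : max (-(b / (a + b) * c)) 0 = -(b / (a + b) * c) :=
            max_eq_left (by linarith)
          rw [hmax]
          have hquad := quad_eq_aux a b c ha0 hb0
          have heq2 : s * (h + r * (b / (a + b) * c) ^ 2 + p * (b / (a + b) * c - c) ^ 2) +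
              μbar * (-(b / (a + b) * c) + c) ^ 2
              = s * h + (a * (b / (a + b) * c) ^ 2 + b * (b / (a + b) * c - c) ^ 2) := by
            rw [ha_def, hb_def]; ring
          rw [heq2, hquad]
        · rintro y ⟨z, rfl⟩
          show s * h + a * b / (a + b) * c ^ 2 ≤
            F₀ (h + r * z ^ 2 + p * (z - δ * (T - t)) ^ 2) +
              μbar * (max (-z) 0 + δ * (T - t)) ^ 2
          rw [← hc_def]
          by_cases hq : h + r * z ^ 2 + p * (z - c) ^ 2 ≤ 1 / lamb
          · rw [hF0lin _ (by positivity) hq]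
            by_cases hz : z ≤ 0
            · have hmax : max (-z) 0 = -z := max_eq_left (by linarith)
              rw [hmax]
              have hquad := quad_min_aux a b z c ha0 hb0
              have heq : s * (h + r * z ^ 2 + p * (z - c) ^ 2) + μbar * (-z + c) ^ 2
                  = s * h + (a * z ^ 2 + b * (z - c) ^ 2) := by
                rw [ha_def, hb_def]; ring
              rw [heq]
              linarith
            · rw [not_le] at hz
              have hmax : max (-z) 0 = 0 := max_eq_right (by linarith)
              rw [hmax]
              have hzc : c ^ 2 ≤ (z - c) ^ 2 := by
                have := mul_nonneg hz.le (neg_nonneg.2 hc0)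
                nlinarith [sq_nonneg z]
              have h1 : a * b / (a + b) ≤ b := by
                rw [div_le_iff₀ hA0]
                nlinarith [sq_nonneg b]
              have h2 : a * b / (a + b) * c ^ 2 ≤ b * c ^ 2 :=
                mul_le_mul_of_nonneg_right h1 (sq_nonneg c)
              have h3 : b * c ^ 2 ≤ s * p * (z - c) ^ 2 + μbar * c ^ 2 := by
                rw [hb_def]
                nlinarith [mul_le_mul_of_nonneg_left hzc (mul_pos hspos hp).le]
              have h4 : 0 ≤ s * r * z ^ 2 :=
                mul_nonneg (mul_nonneg hspos.le hr.le) (sq_nonneg z)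
              nlinarith [h2, h3, h4]
          · rw [not_le] at hq
            have h1 : s * (1 / lamb) ≤ F₀ (h + r * z ^ 2 + p * (z - c) ^ 2) := hF0low _ hq.le
            have h2 : s * h + a * b / (a + b) * c ^ 2 ≤ s * (1 / lamb) := by
              have h3 : a * b / (a + b) ≤ a := by
                rw [div_le_iff₀ hA0]
                nlinarith [sq_nonneg a]
              have h4 : a * b / (a + b) * c ^ 2 ≤ a * c ^ 2 :=
                mul_le_mul_of_nonneg_right h3 (sq_nonneg c)
              have hrc : r * c ^ 2 ≤ r * (δ ^ 2 * T ^ 2) := mul_le_mul_of_nonneg_left hcsq hr.le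
              have h5 : h + r * c ^ 2 ≤ 1 / lamb := by linarith [hsmall]
              have h6 : s * (h + r * c ^ 2) ≤ s * (1 / lamb) :=
                mul_le_mul_of_nonneg_left h5 hspos.le
              nlinarith [h4, h6, ha_def]
            have h7 : 0 ≤ μbar * (max (-z) 0 + c) ^ 2 :=
              mul_nonneg hμbar.le (sq_nonneg _)
            linarith [h1, h2, h7]
      exact hleast.csInf_eq
    -- assemble
    have hmaxδ : max (-δ) 0 = -δ := max_eq_left (by linarith)
    rw [hmFB, hmSB]
    dsimp only
    rw [hSB, hmaxδ, hHvval _ hγ1 hγ2, ← hc_def]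
    ring
  rw [intervalIntegral.integral_congr key]
  have hint : (∫ t in (0:ℝ)..T, (a * b / (a + b) / 2 * (δ * (T - t)) ^ 2
      - ρ * s / 2 * (δ * (T - t)) ^ 2)) =
      (a * b / (a + b) / 2 - ρ * s / 2) * δ ^ 2 * (T ^ 3 / 3) := by
    have h1 : (∫ t in (0:ℝ)..T, (T - t) ^ 2) = T ^ 3 / 3 := by
      have h2 := intervalIntegral.integral_comp_sub_left (a := 0) (b := T)
        (fun x => x ^ 2) T
      simp only [sub_zero, sub_self] at h2
      rw [h2, integral_pow]
      norm_num
    have h3 : ∀ t : ℝ, a * b / (a + b) / 2 * (δ * (T - t)) ^ 2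
        - ρ * s / 2 * (δ * (T - t)) ^ 2
        = ((a * b / (a + b) / 2 - ρ * s / 2) * δ ^ 2) * (T - t) ^ 2 := by
      intro t; ring
    simp_rw [h3]
    rw [intervalIntegral.integral_const_mul, h1]
  rw [hint]
  -- final algebra
  have hinv : (1 / s + (p + r) / μbar) = (μbar + s * (p + r)) / (s * μbar) := by
    field_simp
  rw [hinv, inv_div, hρ, ha_def, hb_def]
  have hne1 : μbar + s * (p + r) ≠ 0 := by positivity
  have hne2 : s * r + (s * p + μbar) ≠ 0 := by positivity
  have hne3 : r + p ≠ 0 := by positivity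
  have hne4 : p + r ≠ 0 := by positivity
  field_simp
  ring
end

section
/- Let h ≥ 0, p > 0, μ̄ > 0 and c ∈ ℝ (risk-neutral consumer, r = 0). Then inf_{z ∈ ℝ} { F₀(h + p(z − c)²) + μ̄ (z⁻ + c)² } = F₀(h) + μ̄ c² · 𝟙_{c ≥ 0}, and the infimum is attained at z = c. Consequently (1/2) μ̄ c² − (1/2) inf_{z ∈ ℝ} { F₀(h + p(z − c)²) + μ̄ (z⁻ + c)² } = (1/2) μ̄ (c⁻)² + H_v(−h), so that with a risk-neutral consumer the second-best HJB nonlinearity coincides with the first-best one. -/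
noncomputable def phiE (ε x : ℝ) : ℝ :=
  if x ≤ 1 then x else if x < (ε ^ 2)⁻¹ then 2 * Real.sqrt x - 1 else ε * x + ε⁻¹ - 1

lemma phi_mono_s17 (ε : ℝ) (hε0 : 0 < ε) (hε1 : ε < 1) {x y : ℝ} (hx : 0 ≤ x) (hxy : x ≤ y) :
    phiE ε x ≤ phiE ε y := by
  have hE1 : (1:ℝ) < (ε ^ 2)⁻¹ := by
    rw [one_lt_inv_iff₀]
    constructor
    · positivity
    · nlinarith
  have hsqrtE : Real.sqrt ((ε ^ 2)⁻¹) = ε⁻¹ := by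
    rw [show (ε^2)⁻¹ = (ε⁻¹)^2 by rw [inv_pow], Real.sqrt_sq (by positivity)]
  unfold phiE
  by_cases hy1 : y ≤ 1
  · rw [if_pos hy1, if_pos (hxy.trans hy1)]; exact hxy
  · push_neg at hy1
    rw [if_neg (not_le.mpr hy1)]
    by_cases hyE : y < (ε ^ 2)⁻¹
    · rw [if_pos hyE]
      have hsy : 1 ≤ Real.sqrt y := by
        rw [show (1:ℝ) = Real.sqrt 1 by simp]
        exact Real.sqrt_le_sqrt hy1.le
      by_cases hx1 : x ≤ 1
      · rw [if_pos hx1]; nlinarith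
      · rw [if_neg hx1, if_pos (lt_of_le_of_lt hxy hyE)]
        have := Real.sqrt_le_sqrt hxy
        linarith
    · push_neg at hyE
      rw [if_neg (not_lt.mpr hyE)]
      have hεy : ε⁻¹ ≤ ε * y := by
        calc ε⁻¹ = ε * (ε^2)⁻¹ := by field_simp
        _ ≤ ε * y := by nlinarith
      by_cases hx1 : x ≤ 1
      · rw [if_pos hx1]
        have hinv : (1:ℝ) ≤ ε⁻¹ := by
          have := mul_inv_cancel₀ (ne_of_gt hε0)
          nlinarith [inv_pos.mpr hε0]
        linarith
      · rw [if_neg hx1]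
        by_cases hxE : x < (ε ^ 2)⁻¹
        · rw [if_pos hxE]
          have : Real.sqrt x ≤ ε⁻¹ := by
            rw [← hsqrtE]; exact Real.sqrt_le_sqrt hxE.le
          linarith
        · rw [if_neg hxE]
          push_neg at hxE
          nlinarith

lemma key_lb (ε a t : ℝ) (hε0 : 0 < ε) (hε1 : ε < 1) (ha : 0 ≤ a)
    (ht : ε ≤ t) (ht1 : t ≤ 1) :
    phiE ε a ≤ 1 / t - 1 + a * t := by
  have ht0 : 0 < t := lt_of_lt_of_le hε0 ht
  unfold phiE
  by_cases ha1 : a ≤ 1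
  · rw [if_pos ha1]
    have h1 : (1 - t) / t ≥ 1 - t := by
      rw [ge_iff_le, le_div_iff₀ ht0]; nlinarith
    have : 1 / t - 1 = (1 - t) / t := by field_simp
    rw [this]; nlinarith
  · rw [if_neg ha1]; push_neg at ha1
    by_cases haE : a < (ε ^ 2)⁻¹
    · rw [if_pos haE]
      set s := Real.sqrt a with hs
      have hs2 : s ^ 2 = a := Real.sq_sqrt ha
      have hs0 : 0 ≤ s := Real.sqrt_nonneg a
      have key : 0 ≤ (1 - s * t)^2 / t := by positivity
      have : (1 - s*t)^2 / t = 1/t - 2*s + s^2*t := by field_simp; ring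
      nlinarith
    · rw [if_neg haE]; push_neg at haE
      -- (t - ε)(a ε t - 1) ≥ 0, divide by ε t
      have h1 : (1:ℝ) ≤ a * ε * t := by
        calc (1:ℝ) = (ε^2)⁻¹ * ε * ε := by field_simp
        _ ≤ a * ε * t := by
            apply mul_le_mul _ ht hε0.le (by positivity)
            exact mul_le_mul_of_nonneg_right haE hε0.le
      have h2 : 0 ≤ (t - ε) * (a * ε * t - 1) := mul_nonneg (by linarith) (by linarith)
      have h3 : 1/t - 1 + a*t - (ε*a + ε⁻¹ - 1) = (t - ε) * (a * ε * t - 1) / (ε * t) := by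
        field_simp; ring
      have h4 : 0 ≤ (t - ε) * (a * ε * t - 1) / (ε * t) := by positivity
      linarith

noncomputable def bstar (ε a : ℝ) : ℝ :=
  if a ≤ 1 then 1 else if a < (ε ^ 2)⁻¹ then (Real.sqrt a)⁻¹ else ε

lemma bstar_mem (ε a : ℝ) (hε0 : 0 < ε) (hε1 : ε < 1) (ha : 0 ≤ a) :
    bstar ε a ∈ Set.Icc ε 1 := by
  unfold bstar
  split_ifs with h1 h2
  · exact ⟨hε1.le, le_refl 1⟩
  · push_neg at h1
    have hs1 : 1 < Real.sqrt a := by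
      rw [show (1:ℝ) = Real.sqrt 1 by simp]
      exact Real.sqrt_lt_sqrt (by norm_num) h1
    have hsE : Real.sqrt a < ε⁻¹ := by
      rw [show ε⁻¹ = Real.sqrt ((ε^2)⁻¹) by
        rw [show (ε^2)⁻¹ = (ε⁻¹)^2 by rw [inv_pow], Real.sqrt_sq (by positivity)]]
      exact Real.sqrt_lt_sqrt ha h2
    constructor
    · rw [le_inv_comm₀ hε0 (by linarith)]
      exact hsE.le
    · rw [inv_le_one_iff₀]; right; exact hs1.le
  · exact ⟨le_refl ε, hε1.le⟩

lemma bstar_eq (ε a : ℝ) (hε0 : 0 < ε) (hε1 : ε < 1) (ha : 0 ≤ a) :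
    1 / bstar ε a - 1 + a * bstar ε a = phiE ε a := by
  unfold bstar phiE
  split_ifs with h1 h2
  · simp
  · push_neg at h1
    have ha0 : 0 < a := by linarith
    have hs0 : 0 < Real.sqrt a := Real.sqrt_pos.mpr ha0
    have hs2 : Real.sqrt a ^ 2 = a := Real.sq_sqrt ha
    field_simp
    ring_nf
    linear_combination -hs2
  · field_simp; ring

/-- With a risk-neutral consumer (`r = 0`),
`inf_z { F₀(h + p(z−c)²) + μ̄(z⁻+c)² } = F₀(h) + μ̄c²·𝟙_{c≥0}`, attained at `z = c`; hence
`(1/2)μ̄c² − (1/2) inf_z {…} = (1/2)μ̄(c⁻)² + H_v(−h)`: the second-best HJB nonlinearity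
coincides with the first-best one. -/
theorem risk_neutral_consumer_second_best
    (d : ℕ) (hd : 1 ≤ d) (σ lam : Fin d → ℝ)
    (hσ : ∀ j, 0 < σ j) (hlam : ∀ j, 0 < lam j)
    (ε : ℝ) (hε : ε ∈ Set.Ioo (0 : ℝ) 1)
    (B : Set (Fin d → ℝ)) (hB : B = {b | ∀ j, b j ∈ Set.Icc ε 1})
    (c₂ : (Fin d → ℝ) → ℝ)
    (hc₂ : c₂ = fun b => ∑ j, (σ j) ^ 2 / lam j * (1 / b j - 1))
    (σsq : (Fin d → ℝ) → ℝ) (hσsq : σsq = fun b => ∑ j, (σ j) ^ 2 * b j)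
    (Hv : ℝ → ℝ)
    (hHv : Hv = fun γ => -(1 / 2) * sInf ((fun b => c₂ b - γ * σsq b) '' B))
    (φ : ℝ → ℝ)
    (hφ : φ = fun x =>
      if x ≤ 1 then x else if x < (ε ^ 2)⁻¹ then 2 * Real.sqrt x - 1 else ε * x + ε⁻¹ - 1)
    (F₀ : ℝ → ℝ) (hF₀ : F₀ = fun q => ∑ j, (σ j) ^ 2 / lam j * φ (lam j * q))
    (h p μbar c : ℝ) (hh : 0 ≤ h) (hp : 0 < p) (hμbar : 0 < μbar)
    (G : ℝ → ℝ)
    (hG : G = fun z => F₀ (h + p * (z - c) ^ 2) + μbar * (max (-z) 0 + c) ^ 2) :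
    (∀ z : ℝ, G c ≤ G z) ∧
      sInf (Set.range G) = F₀ h + μbar * c ^ 2 * (if 0 ≤ c then 1 else 0) ∧
      (1 / 2) * μbar * c ^ 2 - (1 / 2) * sInf (Set.range G) =
        (1 / 2) * μbar * (max (-c) 0) ^ 2 + Hv (-h) := by
  obtain ⟨hε0, hε1⟩ := hε
  have hφ' : φ = phiE ε := hφ
  -- F₀ monotone on nonneg
  have hF0mono : ∀ q q' : ℝ, 0 ≤ q → q ≤ q' → F₀ q ≤ F₀ q' := by
    intro q q' hq hqq'
    rw [hF₀]
    apply Finset.sum_le_sum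
    intro j _
    apply mul_le_mul_of_nonneg_left _ (div_nonneg (sq_nonneg _) (hlam j).le)
    rw [hφ']
    exact phi_mono_s17 ε hε0 hε1 (mul_nonneg (hlam j).le hq)
      (mul_le_mul_of_nonneg_left hqq' (hlam j).le)
  -- part 1
  have part1 : ∀ z : ℝ, G c ≤ G z := by
    intro z
    rw [hG]
    simp only [sub_self]
    have e1 : h + p * (0:ℝ) ^ 2 = h := by ring
    rw [e1]
    have t1 : F₀ h ≤ F₀ (h + p * (z - c) ^ 2) :=
      hF0mono h _ hh (by nlinarith [sq_nonneg (z - c)])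
    have t2 : μbar * (max (-c) 0 + c) ^ 2 ≤ μbar * (max (-z) 0 + c) ^ 2 := by
      apply mul_le_mul_of_nonneg_left _ hμbar.le
      rcases le_or_gt 0 c with hc | hc
      · rw [max_eq_right (by linarith)]
        have : c ≤ max (-z) 0 + c := by
          have := le_max_right (-z) (0:ℝ); linarith
        nlinarith
      · rw [max_eq_left (by linarith)]
        nlinarith [sq_nonneg (max (-z) 0 + c)]
    linarith
  -- G c value
  have hGc : G c = F₀ h + μbar * c ^ 2 * (if 0 ≤ c then 1 else 0) := by
    rw [hG]
    simp only [sub_self]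
    have e1 : h + p * (0:ℝ) ^ 2 = h := by ring
    rw [e1]
    rcases le_or_gt 0 c with hc | hc
    · rw [if_pos hc, max_eq_right (by linarith)]; ring
    · rw [if_neg (not_le.mpr hc), max_eq_left (by linarith)]; ring
  -- sInf range G
  have hsInfG : sInf (Set.range G) = G c := by
    apply le_antisymm
    · exact csInf_le ⟨G c, by rintro y ⟨z, rfl⟩; exact part1 z⟩ (Set.mem_range_self c)
    · exact le_csInf (Set.range_nonempty G) (by rintro y ⟨z, rfl⟩; exact part1 z)
  -- key: value of the per-coordinate objective
  have hval : ∀ b ∈ B, c₂ b - (-h) * σsq b =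
      ∑ j, ((σ j) ^ 2 / lam j * (1 / b j - 1) + h * ((σ j) ^ 2 * b j)) := by
    intro b _
    rw [hc₂, hσsq]
    simp only [neg_mul, sub_neg_eq_add, Finset.mul_sum, ← Finset.sum_add_distrib]
    rw [← Finset.sum_sub_distrib]
    exact Finset.sum_congr rfl (fun j _ => by ring)
  -- lower bound on the image
  have hlb : ∀ b ∈ B, F₀ h ≤ c₂ b - (-h) * σsq b := by
    intro b hbB
    rw [hval b hbB, hF₀, hφ']
    apply Finset.sum_le_sum
    intro j _
    have hbj : b j ∈ Set.Icc ε 1 := by rw [hB] at hbB; exact hbB j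
    have hk := key_lb ε (lam j * h) (b j) hε0 hε1
      (mul_nonneg (hlam j).le hh) hbj.1 hbj.2
    have hcoef : (0:ℝ) ≤ (σ j) ^ 2 / lam j := div_nonneg (sq_nonneg _) (hlam j).le
    have hm := mul_le_mul_of_nonneg_left hk hcoef
    have e : (σ j) ^ 2 / lam j * (1 / b j - 1 + lam j * h * b j) =
        (σ j) ^ 2 / lam j * (1 / b j - 1) + h * ((σ j) ^ 2 * b j) := by
      have hlj : lam j ≠ 0 := (hlam j).ne'
      field_simp
    linarith [hm, e ▸ hm]
  -- attainment
  set bs : Fin d → ℝ := fun j => bstar ε (lam j * h) with hbs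
  have hbsB : bs ∈ B := by
    rw [hB]
    intro j
    exact bstar_mem ε (lam j * h) hε0 hε1 (mul_nonneg (hlam j).le hh)
  have hbsval : c₂ bs - (-h) * σsq bs = F₀ h := by
    rw [hval bs hbsB, hF₀, hφ']
    apply Finset.sum_congr rfl
    intro j _
    have hbe := bstar_eq ε (lam j * h) hε0 hε1 (mul_nonneg (hlam j).le hh)
    have e : (σ j) ^ 2 / lam j * (1 / bstar ε (lam j * h) - 1) +
        h * ((σ j) ^ 2 * bstar ε (lam j * h)) =
        (σ j) ^ 2 / lam j * (1 / bstar ε (lam j * h) - 1 + lam j * h * bstar ε (lam j * h)) := by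
      have hlj : lam j ≠ 0 := (hlam j).ne'
      field_simp
    rw [hbs]
    simp only
    rw [e, hbe]
  have hsInfS : sInf ((fun b => c₂ b - (-h) * σsq b) '' B) = F₀ h := by
    apply le_antisymm
    · exact csInf_le ⟨F₀ h, by rintro y ⟨b, hb, rfl⟩; exact hlb b hb⟩
        ⟨bs, hbsB, hbsval⟩
    · exact le_csInf ⟨_, ⟨bs, hbsB, rfl⟩⟩ (by rintro y ⟨b, hb, rfl⟩; exact hlb b hb)
  have hHvh : Hv (-h) = -(1 / 2) * F₀ h := by
    rw [hHv]
    simp only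
    rw [hsInfS]
  refine ⟨part1, by rw [hsInfG, hGc], ?_⟩
  rw [hsInfG, hGc, hHvh]
  rcases le_or_gt 0 c with hc | hc
  · rw [if_pos hc, max_eq_right (by linarith)]
    ring
  · rw [if_neg (not_le.mpr hc), max_eq_left (by linarith)]
    ring
end
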